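/- arXiv:2208.00333 — 11 statements merged into one kernel-verified Lean document; each statement's English description precedes it below -/
import Mathlib

section
/- Let l ∈ {1, …, t} and δ ∈ F_q. If C_n^l is a run of δ's of length l, then C_{n−k_β}^{l−1} is a run of δ(1−β)'s of length l−1; that is, a_{n−k_β+i} = δ(1−β) for 0 ≤ i ≤ l−2, while a_{n−k_β−1} ≠ δ(1−β) and a_{n−k_β+l−1} ≠ δ(1−β). -/
/-- `C_n^l` is a run of `δ`'s of length `l` in the sequence `a`. -/
def IsRun {F : Type*} (a : ℤ → F) (δ : F) (n : ℤ) (l : ℕ) : Prop :=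
  (∀ j : ℕ, j < l → a (n + j) = δ) ∧ a (n - 1) ≠ δ ∧ a (n + l) ≠ δ

/-- if `C_n^l` is a run of `δ`'s of length `l` (with `1 ≤ l ≤ t`),
then `C_{n-kβ}^{l-1}` is a run of `δ(1-β)`'s of length `l-1`. -/
theorem run_step_back
    (F E : Type*) [Field F] [Fintype F] [Field E] [Fintype E] [Algebra F E]
    (t : ℕ) (ht : 2 ≤ t) (hrank : Module.finrank F E = t)
    (α : E) (hprim : ∀ x : E, x ≠ 0 → ∃ m : ℕ, α ^ m = x)
    (hdeg : (minpoly F α).natDegree = t)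
    (γ : E) (hγ : γ ≠ 0)
    (a : ℤ → F) (ha : ∀ i : ℤ, a i = Algebra.trace F E (γ * α ^ i))
    (β : F) (hβ : β ≠ 0)
    (k : ℤ) (hk : α ^ k * (α - algebraMap F E β) = 1)
    (l : ℕ) (hl1 : 1 ≤ l) (hl2 : l ≤ t)
    (δ : F) (n : ℤ) (hrun : IsRun a δ n l) :
    IsRun a (δ * (1 - β)) (n - k) (l - 1) := by
  have hα : α ≠ 0 := by
    rintro rfl
    rw [minpoly.zero] at hdeg
    simp at hdeg
    omega
  have hinv : α - algebraMap F E β = (α ^ k)⁻¹ := by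
    exact eq_inv_of_mul_eq_one_left (by rw [mul_comm]; exact hk)
  have key : ∀ i : ℤ, a (i - k) = a (i + 1) - β * a i := by
    intro i
    have hpow : α ^ (i - k) = α ^ i * (α - algebraMap F E β) := by
      rw [hinv, zpow_sub₀ hα, div_eq_mul_inv]
    have h1 : γ * α ^ (i - k) = γ * α ^ (i + 1) - algebraMap F E β * (γ * α ^ i) := by
      rw [hpow, zpow_add_one₀ hα]
      ring
    rw [ha, ha, ha, h1, map_sub]
    congr 1
    rw [← Algebra.smul_def, map_smul, smul_eq_mul]
  obtain ⟨hmid, hleft, hright⟩ := hrun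
  refine ⟨?_, ?_, ?_⟩
  · intro j hj
    have h1 : a (n + j) = δ := hmid j (by omega)
    have h2 : a (n + (j + 1) : ℤ) = δ := by
      have := hmid (j + 1) (by omega)
      push_cast at this ⊢
      exact this
    have := key (n + j)
    rw [h1] at this
    have heq : n - k + j = n + j - k := by ring
    rw [heq, this]
    have : (n + (j : ℤ)) + 1 = n + ((j : ℤ) + 1) := by ring
    rw [this, h2]
    ring
  · have := key (n - 1)
    have h0 : a (n + (0 : ℕ)) = δ := hmid 0 (by omega)
    simp only [Nat.cast_zero, add_zero] at h0
    have heq : n - k - 1 = n - 1 - k := by ring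
    rw [heq, this]
    have : n - 1 + 1 = n := by ring
    rw [this, h0]
    intro h
    apply hleft
    have : β * a (n - 1) = β * δ := by linear_combination -h
    exact mul_left_cancel₀ hβ this
  · have hcast : ((l - 1 : ℕ) : ℤ) = (l : ℤ) - 1 := by omega
    have := key (n + (l : ℤ) - 1)
    have h1 : a (n + (l : ℤ) - 1) = δ := by
      have := hmid (l - 1) (by omega)
      rwa [hcast, show n + ((l:ℤ) - 1) = n + (l:ℤ) - 1 by ring] at this
    have heq : n - k + ((l - 1 : ℕ) : ℤ) = n + (l : ℤ) - 1 - k := by rw [hcast]; ring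
    rw [heq, this, h1]
    have : n + (l : ℤ) - 1 + 1 = n + l := by ring
    rw [this]
    intro h
    apply hright
    linear_combination h
end

section
/- Let l ∈ {1, …, t}. If C_{n−k_β}^{l−1} is a run of zeroes of length l−1, then a_{n+i} = β^i · a_n for all 0 ≤ i ≤ l−1 (so C_n^l = (a_n, β a_n, β^2 a_n, …, β^{l−1} a_n)). Moreover, if l = t then a_n ≠ 0; consequently, if a_n ≠ 0 then a_{n+1}, …, a_{n+l−1} are all nonzero, and if a_n = 0 then they are all zero. -/
/-- if `C_{n-kβ}^{l-1}` is a run of zeroes of length `l-1`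
(with `1 ≤ l ≤ t`), then `a (n+i) = β^i * a n` for `0 ≤ i ≤ l-1`; moreover
if `l = t` then `a n ≠ 0`; consequently if `a n ≠ 0` (resp. `a n = 0`) then
`a (n+1), …, a (n+l-1)` are all nonzero (resp. all zero). -/
theorem run_step_forward
    (F E : Type*) [Field F] [Fintype F] [Field E] [Fintype E] [Algebra F E]
    (t : ℕ) (ht : 2 ≤ t) (hrank : Module.finrank F E = t)
    (α : E) (hprim : ∀ x : E, x ≠ 0 → ∃ m : ℕ, α ^ m = x)
    (hdeg : (minpoly F α).natDegree = t)
    (γ : E) (hγ : γ ≠ 0)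
    (a : ℤ → F) (ha : ∀ i : ℤ, a i = Algebra.trace F E (γ * α ^ i))
    (β : F) (hβ : β ≠ 0)
    (k : ℤ) (hk : α ^ k * (α - algebraMap F E β) = 1)
    (l : ℕ) (hl1 : 1 ≤ l) (hl2 : l ≤ t)
    (n : ℤ) (hrun : IsRun a (0 : F) (n - k) (l - 1)) :
    (∀ i : ℕ, i < l → a (n + i) = β ^ i * a n) ∧
    (l = t → a n ≠ 0) ∧
    (a n ≠ 0 → ∀ i : ℕ, 1 ≤ i → i < l → a (n + i) ≠ 0) ∧
    (a n = 0 → ∀ i : ℕ, 1 ≤ i → i < l → a (n + i) = 0) := by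
  have hα : α ≠ 0 := by
    intro h
    rw [h, minpoly.zero, Polynomial.natDegree_X] at hdeg
    omega
  -- the key recurrence: a (m + 1) = β * a m + a (m - k)
  have key : ∀ m : ℤ, a (m + 1) = β * a m + a (m - k) := by
    intro m
    have hinv : α ^ (-k) = α - algebraMap F E β := by
      rw [zpow_neg]
      exact inv_eq_of_mul_eq_one_right hk
    have h1 : γ * α ^ (m - k) = γ * α ^ (m + 1) - algebraMap F E β * (γ * α ^ m) := by
      rw [sub_eq_add_neg m k, zpow_add₀ hα, hinv, zpow_add₀ hα, zpow_one]
      ring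
    have h2 := ha (m - k)
    rw [h1, map_sub] at h2
    have h3 : (Algebra.trace F E) (algebraMap F E β * (γ * α ^ m))
        = β * (Algebra.trace F E) (γ * α ^ m) := by
      rw [← Algebra.smul_def, map_smul, smul_eq_mul]
    rw [h3, ← ha (m + 1), ← ha m] at h2
    rw [h2]; ring
  obtain ⟨hz, -, -⟩ := hrun
  -- part 1
  have part1 : ∀ i : ℕ, i < l → a (n + i) = β ^ i * a n := by
    intro i
    induction i with
    | zero => intro _; simp
    | succ j ih =>
      intro hj
      have hj' : j < l := by omega
      have hzj : a (n - k + j) = 0 := hz j (by omega)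
      have := key (n + j)
      rw [show n + j + 1 = n + (j + 1 : ℕ) by push_cast; ring,
        show n + j - k = n - k + j by ring, hzj, add_zero] at this
      rw [this, ih hj', pow_succ]
      ring
  refine ⟨part1, ?_, ?_, ?_⟩
  · -- if l = t then a n ≠ 0
    rintro rfl han
    -- then a (n + i) = 0 for all i < t
    have hzero : ∀ i : ℕ, i < l → a (n + i) = 0 := by
      intro i hi; rw [part1 i hi, han, mul_zero]
    -- power basis of E
    have hint : IsIntegral F α := IsIntegral.of_finite F α
    let pb := Algebra.adjoin.powerBasis hint
    have hdim : pb.dim = l := by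
      rw [show pb.dim = (minpoly F α).natDegree from rfl, hdeg]
    have htop : Algebra.adjoin F ({α} : Set E) = ⊤ := by
      have hfr : Module.finrank F (Algebra.adjoin F ({α} : Set E)) = Module.finrank F E := by
        rw [pb.finrank, hdim, hrank]
      have := Submodule.eq_top_of_finrank_eq (S := Subalgebra.toSubmodule
        (Algebra.adjoin F ({α} : Set E))) hfr
      rwa [Algebra.toSubmodule_eq_top] at this
    let e : Algebra.adjoin F ({α} : Set E) ≃ₐ[F] E :=
      (Subalgebra.equivOfEq _ _ htop).trans Subalgebra.topEquiv
    let pb' := pb.map e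
    have hdim' : pb'.dim = l := hdim
    have hgen : pb'.gen = α := rfl
    have hb : ∀ i : Fin pb'.dim, pb'.basis i = α ^ (i : ℕ) := by
      intro i; rw [pb'.basis_eq_pow, hgen]
    -- the linear functional x ↦ Tr (γ α^n x) vanishes on the basis
    have hvan : ∀ x : E, Algebra.trace F E (γ * α ^ n * x) = 0 := by
      intro x
      have : (Algebra.traceForm F E (γ * α ^ n)) = 0 := by
        apply pb'.basis.ext
        intro i
        rw [hb i]
        have hi : (i : ℕ) < l := hdim' ▸ i.2
        have : a (n + (i : ℕ)) = 0 := hzero _ hi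
        rw [ha] at this
        simpa [Algebra.traceForm_apply, zpow_add₀ hα, zpow_natCast, mul_assoc] using this
      have := LinearMap.congr_fun this x
      simpa [Algebra.traceForm_apply] using this
    have hne : γ * α ^ n ≠ 0 := mul_ne_zero hγ (zpow_ne_zero _ hα)
    exact hne ((traceForm_nondegenerate F E).1 _ (fun y => by
      rw [Algebra.traceForm_apply]; exact hvan y))
  · intro han i _ hi
    rw [part1 i hi]
    exact mul_ne_zero (pow_ne_zero _ hβ) han
  · intro han i _ hi
    rw [part1 i hi, han, mul_zero]
end

section
/- Let l ∈ {2, …, t} and suppose β = 1, i.e., k_1 ∈ ℤ satisfies α^{k_1}(α − 1) = 1. If C_{n−k_1}^{l−1} is a run of zeroes of length l−1, then C_n^l is a run of a_n's of length l; that is, a_{n+i} = a_n for all 0 ≤ i ≤ l−1, while a_{n−1} ≠ a_n and a_{n+l} ≠ a_n. -/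
/-- taking `β = 1` (so `α^{k₁}(α - 1) = 1`), if `C_{n-k₁}^{l-1}`
is a run of zeroes of length `l-1` (with `2 ≤ l ≤ t`), then `C_n^l` is a run
of `a n`'s of length `l`. -/
theorem run_step_forward_beta_one
    (F E : Type*) [Field F] [Fintype F] [Field E] [Fintype E] [Algebra F E]
    (t : ℕ) (ht : 2 ≤ t) (hrank : Module.finrank F E = t)
    (α : E) (hprim : ∀ x : E, x ≠ 0 → ∃ m : ℕ, α ^ m = x)
    (hdeg : (minpoly F α).natDegree = t)
    (γ : E) (hγ : γ ≠ 0)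
    (a : ℤ → F) (ha : ∀ i : ℤ, a i = Algebra.trace F E (γ * α ^ i))
    (k : ℤ) (hk : α ^ k * (α - 1) = 1)
    (l : ℕ) (hl1 : 2 ≤ l) (hl2 : l ≤ t)
    (n : ℤ) (hrun : IsRun a (0 : F) (n - k) (l - 1)) :
    IsRun a (a n) n l := by
  -- α ≠ 0
  have hcard : 2 < Fintype.card E := by
    have h1 : Fintype.card E = Fintype.card F ^ t := by
      have := Module.card_fintype (Module.finBasis F E)
      simpa [hrank] using this
    have h2 : 2 ≤ Fintype.card F := Fintype.one_lt_card
    calc 2 < 2 ^ 2 := by norm_num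
      _ ≤ Fintype.card F ^ 2 := Nat.pow_le_pow_left h2 2
      _ ≤ Fintype.card F ^ t := Nat.pow_le_pow_right (by omega) ht
      _ = Fintype.card E := h1.symm
  have hα : α ≠ 0 := by
    classical
    intro hz
    obtain ⟨x, hx0, hx1⟩ : ∃ x : E, x ≠ 0 ∧ x ≠ 1 := by
      by_contra h
      push_neg at h
      have hsub : (Finset.univ : Finset E) ⊆ {0, 1} := by
        intro x _
        rcases eq_or_ne x 0 with h0 | h0
        · simp [h0]
        · simp [h x h0]
      have hle := Finset.card_le_card hsub
      have h01 : ({0, 1} : Finset E).card ≤ 2 := Finset.card_insert_le _ _ |>.trans (by simp)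
      rw [Finset.card_univ] at hle
      omega
    obtain ⟨m, hm⟩ := hprim x hx0
    subst hz
    rcases Nat.eq_zero_or_pos m with hm0 | hm0
    · rw [hm0, pow_zero] at hm; exact hx1 hm.symm
    · rw [zero_pow (by omega)] at hm; exact hx0 hm.symm
  -- α - 1 = α ^ (-k)
  have hα1 : α - 1 = α ^ (-k) := by
    rw [zpow_neg]
    exact (inv_eq_of_mul_eq_one_right hk).symm
  -- key recurrence
  have hstep : ∀ i : ℤ, a (i + 1) - a i = a (i - k) := by
    intro i
    rw [ha, ha, ha, ← map_sub]
    congr 1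
    have : α ^ (i - k) = α ^ i * (α - 1) := by
      rw [hα1, ← zpow_add₀ hα, sub_eq_add_neg]
    rw [this, zpow_add₀ hα, zpow_one]
    ring
  obtain ⟨h0, h1, h2⟩ := hrun
  -- all equal
  have hall : ∀ j : ℕ, j < l → a (n + j) = a n := by
    intro j hj
    induction j with
    | zero => simp
    | succ j ih =>
      have hj' : j < l - 1 := by omega
      have hz := h0 j hj'
      have hs := hstep (n + j)
      rw [show n + j - k = n - k + j by ring, hz] at hs
      have : a (n + (j + 1 : ℕ)) = a (n + j) := by
        push_cast
        rw [show n + ((j : ℤ) + 1) = n + j + 1 by ring]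
        linear_combination hs
      rw [this, ih (by omega)]
  refine ⟨hall, ?_, ?_⟩
  · intro h
    have hs := hstep (n - 1)
    rw [show n - 1 + 1 = n by ring, show n - 1 - k = n - k - 1 by ring, h] at hs
    simp at hs
    exact h1 hs.symm
  · intro h
    have hs := hstep (n + (l - 1 : ℕ))
    rw [show n + ((l - 1 : ℕ) : ℤ) - k = n - k + (l - 1 : ℕ) by ring] at hs
    apply h2
    rw [← hs]
    have e1 : a (n + ((l - 1 : ℕ) : ℤ) + 1) = a (n + l) := by
      congr 1
      have : ((l - 1 : ℕ) : ℤ) = (l : ℤ) - 1 := by omega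
      rw [this]; ring
    have e2 : a (n + (l - 1 : ℕ)) = a n := hall (l - 1) (by omega)
    rw [e1, e2, h, sub_self]
end

section
/- Let t ≥ 3, l ∈ {0, …, t−3}, and suppose C_n^l is a run of zeroes of length l. Then a_{n+k_β+j} = β^j · a_{n+k_β} for j = 1, …, l, and a_{n+k_β+j} = ∑_{i=l}^{j−1} β^{j−i−1} a_{n+i} + β^j a_{n+k_β} for j = l+1, …, t. -/
/-- if `C_n^l` is a run of zeroes of length `l` (with
`0 ≤ l ≤ t-3`), then `a (n+kβ+j) = β^j a (n+kβ)` for `j = 1, …, l`, and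
`a (n+kβ+j) = ∑_{i=l}^{j-1} β^{j-i-1} a (n+i) + β^j a (n+kβ)` for
`j = l+1, …, t`. -/
theorem run_forward_expansion
    (F E : Type*) [Field F] [Fintype F] [Field E] [Fintype E] [Algebra F E]
    (t : ℕ) (ht : 3 ≤ t) (hrank : Module.finrank F E = t)
    (α : E) (hprim : ∀ x : E, x ≠ 0 → ∃ m : ℕ, α ^ m = x)
    (hdeg : (minpoly F α).natDegree = t)
    (γ : E) (hγ : γ ≠ 0)
    (a : ℤ → F) (ha : ∀ i : ℤ, a i = Algebra.trace F E (γ * α ^ i))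
    (β : F) (hβ : β ≠ 0)
    (k : ℤ) (hk : α ^ k * (α - algebraMap F E β) = 1)
    (l : ℕ) (hl : l ≤ t - 3)
    (n : ℤ) (hrun : IsRun a (0 : F) n l) :
    (∀ j : ℕ, 1 ≤ j → j ≤ l → a (n + k + j) = β ^ j * a (n + k)) ∧
    (∀ j : ℕ, l + 1 ≤ j → j ≤ t →
      a (n + k + j) =
        (∑ i ∈ Finset.Ico l j, β ^ (j - i - 1) * a (n + i)) + β ^ j * a (n + k)) := by
  have hα : α ≠ 0 := by
    intro h
    rw [h, minpoly.zero] at hdeg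
    simp [Polynomial.natDegree_X] at hdeg
    omega
  have hstep : ∀ i : ℤ, α ^ (k + i + 1) = algebraMap F E β * α ^ (k + i) + α ^ i := by
    intro i
    have h1 : α ^ (k + 1) = algebraMap F E β * α ^ k + 1 := by
      rw [zpow_add_one₀ hα]
      have := hk
      rw [mul_sub] at this
      linear_combination this
    calc α ^ (k + i + 1) = α ^ (k + 1) * α ^ i := by
          rw [← zpow_add₀ hα]; ring_nf
      _ = algebraMap F E β * α ^ (k + i) + α ^ i := by
          rw [h1, zpow_add₀ hα]; ring
  have hrec : ∀ i : ℤ, a (k + i + 1) = β * a (k + i) + a i := by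
    intro i
    rw [ha, ha, ha, hstep]
    have h2 : γ * (algebraMap F E β * α ^ (k + i) + α ^ i)
        = β • (γ * α ^ (k + i)) + γ * α ^ i := by
      rw [Algebra.smul_def]; ring
    rw [h2, map_add, map_smul, smul_eq_mul]
  have rec' : ∀ j : ℕ, a (n + k + ((j : ℤ) + 1)) = β * a (n + k + j) + a (n + j) := by
    intro j
    have := hrec (n + j)
    rw [show k + (n + (j : ℤ)) + 1 = n + k + ((j : ℤ) + 1) by ring,
      show k + (n + (j : ℤ)) = n + k + (j : ℤ) by ring] at this
    exact this
  have hz := hrun.1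
  have h1 : ∀ j : ℕ, j ≤ l → a (n + k + j) = β ^ j * a (n + k) := by
    intro j
    induction j with
    | zero => intro _; simp
    | succ j ih =>
      intro hj
      have hjl : j < l := by omega
      have e1 := rec' j
      rw [hz j hjl, ih (by omega)] at e1
      push_cast
      rw [e1, pow_succ]
      ring
  have h2 : ∀ j : ℕ, l ≤ j →
      a (n + k + j) = (∑ i ∈ Finset.Ico l j, β ^ (j - i - 1) * a (n + i))
        + β ^ j * a (n + k) := by
    intro j
    induction j with
    | zero =>
      intro h0
      have : l = 0 := by omega
      subst this
      simp
    | succ j ih =>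
      intro hj
      by_cases hc : l ≤ j
      · have e1 := rec' j
        rw [ih hc] at e1
        push_cast
        rw [e1, Finset.sum_Ico_succ_top hc]
        rw [show j + 1 - j - 1 = 0 by omega, pow_zero, one_mul]
        have hsum : ∀ i ∈ Finset.Ico l j,
            β ^ (j + 1 - i - 1) * a (n + i) = β * (β ^ (j - i - 1) * a (n + i)) := by
          intro i hi
          simp only [Finset.mem_Ico] at hi
          rw [← mul_assoc, ← pow_succ', show j + 1 - i - 1 = j - i - 1 + 1 by omega]
        rw [Finset.sum_congr rfl hsum, ← Finset.mul_sum, pow_succ]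
        ring
      · have hl1 : j + 1 = l := by omega
        rw [show Finset.Ico l (j + 1) = ∅ by rw [Finset.Ico_eq_empty_iff]; omega]
        simpa using h1 (j + 1) (by omega)
  exact ⟨fun j _ hj => h1 j hj, fun j hj1 _ => h2 j (by omega)⟩
end

section
/- Let t ≥ 3, l ∈ {0, …, t−3}, and suppose C_n^l is a run of zeroes of length l. Then β is a root of the polynomial a_{n+k_β}·f(x) + P(x) ∈ F_q[x], where P(x) = ∑_{j=0}^{t−l−1} c_{j+l+1} ∑_{i=0}^{j} a_{n+l+j−i} x^i with the convention c_t = 1. -/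
open Polynomial

/-- if `C_n^l` is a run of zeroes of length `l` (with
`0 ≤ l ≤ t-3`), then `β` is a root of the polynomial
`a_{n+kβ}·f(x) + P(x)`, where
`P(x) = ∑_{j=0}^{t-l-1} c_{j+l+1} ∑_{i=0}^{j} a_{n+l+j-i} x^i` (with `c_t = 1`). -/
theorem beta_root_of_combined_poly
    (F E : Type*) [Field F] [Fintype F] [Field E] [Fintype E] [Algebra F E]
    (t : ℕ) (ht : 3 ≤ t) (hrank : Module.finrank F E = t)
    (α : E) (hprim : ∀ x : E, x ≠ 0 → ∃ m : ℕ, α ^ m = x)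
    (c : ℕ → F)
    (hmin : minpoly F α = X ^ t + ∑ j ∈ Finset.range t, C (c j) * X ^ j)
    (hct : c t = 1)
    (γ : E) (hγ : γ ≠ 0)
    (a : ℤ → F) (ha : ∀ i : ℤ, a i = Algebra.trace F E (γ * α ^ i))
    (β : F) (hβ : β ≠ 0)
    (k : ℤ) (hk : α ^ k * (α - algebraMap F E β) = 1)
    (l : ℕ) (hl : l ≤ t - 3)
    (n : ℤ) (hrun : IsRun a (0 : F) n l)
    (P : Polynomial F)
    (hP : P = ∑ j ∈ Finset.range (t - l), C (c (j + l + 1)) *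
        ∑ i ∈ Finset.range (j + 1), C (a (n + l + j - i)) * X ^ i) :
    (C (a (n + k)) * minpoly F α + P).eval β = 0 := by
  classical
  have hlt : l + 3 ≤ t := by omega
  -- α is nonzero
  have hα0 : α ≠ 0 := by
    intro h
    rw [h, minpoly.zero] at hmin
    have h2 := congrArg (fun p => Polynomial.coeff p t) hmin
    simp [Polynomial.coeff_X, Polynomial.coeff_X_pow, Finset.sum_ite_eq] at h2
    omega
  -- the trace is F-linear
  have tr_smul : ∀ (s : F) (x : E),
      Algebra.trace F E (algebraMap F E s * x) = s * Algebra.trace F E x := by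
    intro s x
    rw [← Algebra.smul_def, map_smul, smul_eq_mul]
  -- α is a root of the minimal polynomial, in expanded form (using `c t = 1`)
  have hf0 : ∑ m ∈ Finset.range (t+1), algebraMap F E (c m) * α ^ m = 0 := by
    have h := minpoly.aeval F α
    rw [hmin] at h
    simp only [map_add, map_pow, map_sum, aeval_X, aeval_C, map_mul] at h
    rw [Finset.sum_range_succ, hct, map_one, one_mul]
    linear_combination h
  -- the value of the minimal polynomial at β, in expanded form
  set S : F := (minpoly F α).eval β with hSdef
  have hS : S = ∑ m ∈ Finset.range (t+1), c m * β ^ m := by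
    rw [hSdef, hmin]
    simp only [eval_add, eval_pow, eval_X, eval_finset_sum, eval_mul, eval_C]
    rw [Finset.sum_range_succ, hct, one_mul]
    ring
  -- Key step 1: `a (n+k) * f(β)` as a double sum of sequence values
  have key1 : a (n + k) * S
      = -∑ m ∈ Finset.range (t+1), c m * ∑ i ∈ Finset.range m,
          β ^ i * a (n + m - 1 - i) := by
    have helt : algebraMap F E S * (γ * α ^ (n + k))
        = ∑ m ∈ Finset.range (t+1), ∑ i ∈ Finset.range m,
            algebraMap F E (c m * β ^ i) * -(γ * α ^ (n + (m : ℤ) - 1 - (i : ℤ))) := by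
      have hSm : algebraMap F E S
          = ∑ m ∈ Finset.range (t+1), algebraMap F E (c m) * (algebraMap F E β) ^ m := by
        rw [hS]; push_cast [map_sum, map_mul, map_pow]; rfl
      rw [hSm]
      have h1 : ∑ m ∈ Finset.range (t+1), algebraMap F E (c m) * (algebraMap F E β) ^ m
          = ∑ m ∈ Finset.range (t+1), algebraMap F E (c m)
              * ((algebraMap F E β) ^ m - α ^ m) := by
        rw [← sub_eq_zero, ← Finset.sum_sub_distrib, ← hf0]
        apply Finset.sum_congr rfl
        intro m hm; ring
      rw [h1, Finset.sum_mul]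
      apply Finset.sum_congr rfl
      intro m hm
      rw [← geom_sum₂_mul (algebraMap F E β) α m, Finset.sum_mul, Finset.mul_sum,
        Finset.sum_mul]
      apply Finset.sum_congr rfl
      intro i hi
      have hiltm : i < m := Finset.mem_range.mp hi
      have hcast : ((m - 1 - i : ℕ) : ℤ) = (m : ℤ) - 1 - (i : ℤ) := by omega
      have hz1 : α ^ ((m - 1 - i : ℕ)) = α ^ ((m : ℤ) - 1 - (i : ℤ)) := by
        rw [← hcast, zpow_natCast]
      have hz2 : α ^ (n + k) * (algebraMap F E β - α) = -α ^ n := by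
        have h3 : α ^ k * (algebraMap F E β - α) = -1 := by linear_combination -hk
        rw [zpow_add₀ hα0, mul_assoc, h3, mul_neg_one]
      have hz3 : α ^ n * α ^ ((m : ℤ) - 1 - (i : ℤ)) = α ^ (n + (m : ℤ) - 1 - (i : ℤ)) := by
        rw [← zpow_add₀ hα0]; ring_nf
      rw [map_mul, map_pow]
      calc algebraMap F E (c m) * ((algebraMap F E β) ^ i * α ^ (m - 1 - i)
              * (algebraMap F E β - α)) * (γ * α ^ (n + k))
          = algebraMap F E (c m) * (algebraMap F E β) ^ i * α ^ (m - 1 - i)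
              * (α ^ (n + k) * (algebraMap F E β - α)) * γ := by ring
        _ = algebraMap F E (c m) * (algebraMap F E β) ^ i
              * -(γ * (α ^ n * α ^ ((m : ℤ) - 1 - (i : ℤ)))) := by rw [hz1, hz2]; ring
        _ = algebraMap F E (c m) * (algebraMap F E β) ^ i
              * -(γ * α ^ (n + (m : ℤ) - 1 - (i : ℤ))) := by rw [hz3]
    have htr := congrArg (Algebra.trace F E) helt
    rw [map_sum] at htr
    have hlhs : Algebra.trace F E (algebraMap F E S * (γ * α ^ (n + k)))
        = S * a (n + k) := by rw [tr_smul, ha]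
    rw [hlhs] at htr
    rw [mul_comm, htr, ← Finset.sum_neg_distrib]
    apply Finset.sum_congr rfl
    intro m hm
    rw [map_sum, Finset.mul_sum, ← Finset.sum_neg_distrib]
    apply Finset.sum_congr rfl
    intro i hi
    rw [tr_smul, map_neg, ← ha]
    ring
  -- Key step 2: the value of `P` at β, reindexed
  have key2 : P.eval β = ∑ m ∈ Finset.Ico (l+1) (t+1), c m * ∑ i ∈ Finset.range (m - l),
      β ^ i * a (n + m - 1 - i) := by
    rw [Finset.sum_Ico_eq_sum_range]
    have h1 : t + 1 - (l + 1) = t - l := by omega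
    rw [h1, hP]
    simp only [eval_finset_sum, eval_mul, eval_C, eval_pow, eval_X]
    apply Finset.sum_congr rfl
    intro j hj
    have h2 : l + 1 + j = j + l + 1 := by omega
    rw [h2]
    congr 1
    have h3 : j + l + 1 - l = j + 1 := by omega
    rw [h3]
    apply Finset.sum_congr rfl
    intro i hi
    have h4 : n + (l:ℤ) + j - i = n + (↑(j + l + 1) : ℤ) - 1 - i := by push_cast; ring
    rw [h4]; ring
  -- Key step 3: using the run of zeroes, the two double sums agree
  have key3 : ∑ m ∈ Finset.range (t+1), c m * ∑ i ∈ Finset.range m,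
        β ^ i * a (n + m - 1 - i)
      = ∑ m ∈ Finset.Ico (l+1) (t+1), c m * ∑ i ∈ Finset.range (m - l),
          β ^ i * a (n + m - 1 - i) := by
    have hz := hrun.1
    have hz' : ∀ (m i : ℕ), i < m → (m : ℤ) - 1 - i < l → a (n + m - 1 - i) = 0 := by
      intro m i him hless
      have hj : (m - 1 - i : ℕ) < l := by omega
      have hcast : n + (m:ℤ) - 1 - i = n + ((m - 1 - i : ℕ) : ℤ) := by
        have : ((m - 1 - i : ℕ) : ℤ) = (m:ℤ) - 1 - i := by omega
        omega
      rw [hcast, hz _ hj]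
    simp only [Finset.range_eq_Ico]
    rw [← Finset.sum_Ico_consecutive _ (Nat.zero_le (l+1)) (by omega : l + 1 ≤ t + 1)]
    have hfirst : ∑ m ∈ Finset.Ico 0 (l+1), c m * ∑ i ∈ Finset.Ico 0 m,
        β ^ i * a (n + m - 1 - i) = 0 := by
      apply Finset.sum_eq_zero
      intro m hm
      have hm' : m < l + 1 := (Finset.mem_Ico.mp hm).2
      have hinner : ∑ i ∈ Finset.Ico 0 m, β ^ i * a (n + m - 1 - i) = 0 := by
        apply Finset.sum_eq_zero
        intro i hi
        rw [hz' m i (Finset.mem_Ico.mp hi).2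
          (by have := (Finset.mem_Ico.mp hi).2; omega), mul_zero]
      rw [hinner, mul_zero]
    rw [hfirst, zero_add]
    apply Finset.sum_congr rfl
    intro m hm
    obtain ⟨hm1, hm2⟩ := Finset.mem_Ico.mp hm
    congr 1
    rw [← Finset.sum_Ico_consecutive _ (Nat.zero_le (m - l)) (by omega : m - l ≤ m)]
    have htail : ∑ i ∈ Finset.Ico (m - l) m, β ^ i * a (n + m - 1 - i) = 0 := by
      apply Finset.sum_eq_zero
      intro i hi
      obtain ⟨hi1, hi2⟩ := Finset.mem_Ico.mp hi
      rw [hz' m i hi2 (by omega), mul_zero]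
    rw [htail, add_zero]
  -- Put everything together
  rw [eval_add, eval_mul, eval_C, ← hSdef, key1, key2, key3, neg_add_cancel]
end

section
/- Let t ≥ 3, l ∈ {0, …, t−3}, and suppose C_n^l is a run of zeroes of length l. Then C_{n+k_β}^{l+1} is a run of zeroes of length l+1 if and only if β is a root of the degree-(t−l−1) polynomial P(x) = ∑_{j=0}^{t−l−1} c_{j+l+1} ∑_{i=0}^{j} a_{n+l+j−i} x^i ∈ F_q[x], with the convention c_t = 1. -/
open Polynomial

/-- if `C_n^l` is a run of zeroes of length `l` (with
`0 ≤ l ≤ t-3`), then `C_{n+kβ}^{l+1}` is a run of zeroes of length `l+1`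
iff `β` is a root of the degree-`(t-l-1)` polynomial
`P(x) = ∑_{j=0}^{t-l-1} c_{j+l+1} ∑_{i=0}^{j} a_{n+l+j-i} x^i` (with `c_t = 1`). -/
theorem run_extension_iff_root
    (F E : Type*) [Field F] [Fintype F] [Field E] [Fintype E] [Algebra F E]
    (t : ℕ) (ht : 3 ≤ t) (hrank : Module.finrank F E = t)
    (α : E) (hprim : ∀ x : E, x ≠ 0 → ∃ m : ℕ, α ^ m = x)
    (c : ℕ → F)
    (hmin : minpoly F α = X ^ t + ∑ j ∈ Finset.range t, C (c j) * X ^ j)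
    (hct : c t = 1)
    (γ : E) (hγ : γ ≠ 0)
    (a : ℤ → F) (ha : ∀ i : ℤ, a i = Algebra.trace F E (γ * α ^ i))
    (β : F) (hβ : β ≠ 0)
    (k : ℤ) (hk : α ^ k * (α - algebraMap F E β) = 1)
    (l : ℕ) (hl : l ≤ t - 3)
    (n : ℤ) (hrun : IsRun a (0 : F) n l)
    (P : Polynomial F)
    (hP : P = ∑ j ∈ Finset.range (t - l), C (c (j + l + 1)) *
        ∑ i ∈ Finset.range (j + 1), C (a (n + l + j - i)) * X ^ i) :
    P.natDegree = t - l - 1 ∧ (IsRun a (0 : F) (n + k) (l + 1) ↔ P.eval β = 0) := by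
  classical
  have htl : l + 3 ≤ t := by omega
  -- degree of the minimal polynomial
  have hq : (X ^ t + ∑ j ∈ Finset.range t, C (c j) * X ^ j : F[X]).coeff t = 1 := by
    rw [coeff_add, coeff_X_pow, if_pos rfl, finset_sum_coeff, Finset.sum_eq_zero, add_zero]
    intro j hj
    have hjt : j ≠ t := (Finset.mem_range.mp hj).ne
    simp [coeff_C_mul, coeff_X_pow, Ne.symm hjt]
  have hdeg : (minpoly F α).natDegree = t := by
    rw [hmin]
    refine le_antisymm ?_ (le_natDegree_of_ne_zero (by rw [hq]; exact one_ne_zero))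
    refine (natDegree_add_le _ _).trans (max_le (by simp) ?_)
    refine natDegree_sum_le_of_forall_le _ _ fun j hj => ?_
    refine (natDegree_C_mul_le _ _).trans ?_
    simpa using (Finset.mem_range.mp hj).le
  have hα : α ≠ 0 := by
    intro h0
    have h1 : (minpoly F α).natDegree = 1 := by rw [h0, minpoly.zero]; exact natDegree_X
    omega
  -- the algebraic relation for α
  have haeval : α ^ t + ∑ j ∈ Finset.range t, algebraMap F E (c j) * α ^ j = 0 := by
    have h0 := minpoly.aeval F α
    rw [hmin] at h0
    simpa [map_add, map_sum, map_mul, map_pow, aeval_X, aeval_C] using h0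
  have hsum0 : (∑ m ∈ Finset.range (t + 1), algebraMap F E (c m) * α ^ m) = 0 := by
    rw [Finset.sum_range_succ, hct, map_one, one_mul, add_comm]
    exact haeval
  have htr : ∀ (d : F) (x : E),
      d * Algebra.trace F E x = Algebra.trace F E (algebraMap F E d * x) := by
    intro d x
    rw [← Algebra.smul_def, map_smul, smul_eq_mul]
  -- linear recurrence for a
  have hrec : ∀ i : ℤ, ∑ m ∈ Finset.range (t + 1), c m * a (i + m) = 0 := by
    intro i
    have h1 : ∀ m ∈ Finset.range (t + 1), c m * a (i + m)
        = Algebra.trace F E (algebraMap F E (c m) * (γ * α ^ i * α ^ m)) := by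
      intro m _
      rw [ha, htr]
      congr 2
      rw [zpow_add₀ hα, zpow_natCast]
      ring
    rw [Finset.sum_congr rfl h1, ← map_sum]
    have h2 : ∑ m ∈ Finset.range (t + 1), algebraMap F E (c m) * (γ * α ^ i * α ^ m)
        = γ * α ^ i * ∑ m ∈ Finset.range (t + 1), algebraMap F E (c m) * α ^ m := by
      rw [Finset.mul_sum]
      exact Finset.sum_congr rfl fun m _ => by ring
    rw [h2, hsum0, mul_zero, map_zero]
  -- the shifted sequence b
  set b : ℤ → F := fun i => a (n + k + i) with hb
  have hinv : α - algebraMap F E β = (α ^ k)⁻¹ :=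
    eq_inv_of_mul_eq_one_left (by rw [mul_comm]; exact hk)
  have hkne : α ^ k ≠ 0 := zpow_ne_zero _ hα
  have hab : ∀ i : ℤ, a (n + i) = b (i + 1) - β * b i := by
    intro i
    have e1 : γ * α ^ (n + i) = γ * α ^ (n + k + i) * (α - algebraMap F E β) := by
      have e0 : α ^ (n + k + i) = α ^ (n + i) * α ^ k := by
        rw [← zpow_add₀ hα]
        congr 1
        ring
      rw [hinv, e0, mul_assoc, mul_assoc, mul_inv_cancel₀ hkne, mul_one]
    have e2 : γ * α ^ (n + k + i) * (α - algebraMap F E β)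
        = γ * α ^ (n + k + (i + 1)) - algebraMap F E β * (γ * α ^ (n + k + i)) := by
      rw [show n + k + (i + 1) = (n + k + i) + 1 by ring, zpow_add_one₀ hα]
      ring
    simp only [hb]
    simp only [ha]
    rw [htr, ← map_sub, e1, e2]
  -- powers along the run
  have hbrec : ∀ j : ℕ, j ≤ l → b j = β ^ j * b 0 := by
    intro j hj
    induction j with
    | zero => simp
    | succ m ih =>
      have hm : m < l := by omega
      have h0 : a (n + m) = 0 := hrun.1 m hm
      have h2 := hab (m : ℤ)
      rw [h0] at h2
      have h3 : b ((m : ℤ) + 1) = β * b m := sub_eq_zero.mp h2.symm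
      rw [show (((m + 1 : ℕ)) : ℤ) = (m : ℤ) + 1 by push_cast; ring, h3, ih (by omega)]
      ring
  -- the run-extension criterion in terms of b 0
  have hiff : IsRun a 0 (n + k) (l + 1) ↔ b 0 = 0 := by
    constructor
    · intro h
      have := h.1 0 (by omega)
      simpa [hb] using this
    · intro h0
      refine ⟨?_, ?_, ?_⟩
      · intro j hj
        have : b j = 0 := by rw [hbrec j (by omega), h0, mul_zero]
        simpa [hb] using this
      · intro hcon
        apply hrun.2.1
        have h2 : a (n + (-1)) = b 0 - β * b (-1) := by simpa using hab (-1)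
        have hbneg : b (-1) = 0 := by
          simpa [hb, show n + k + (-1) = n + k - 1 by ring] using hcon
        rw [show n - 1 = n + (-1) by ring, h2, h0, hbneg]
        ring
      · intro hcon
        apply hrun.2.2
        have h2 := hab (l : ℤ)
        have hbl : b l = 0 := by rw [hbrec l le_rfl, h0, mul_zero]
        have hbl1 : b ((l : ℤ) + 1) = 0 := by
          simpa [hb, show (((l + 1 : ℕ)) : ℤ) = (l : ℤ) + 1 by push_cast; ring] using hcon
        rw [h2, hbl, hbl1]
        ring
  -- the telescoping identity
  have hS : ∀ j : ℕ, ∑ i ∈ Finset.range (j + 1), a (n + l + j - i) * β ^ i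
      = b ((l : ℤ) + j + 1) - β ^ (j + 1) * b l := by
    intro j
    induction j with
    | zero =>
      rw [Finset.sum_range_succ, Finset.sum_range_zero, zero_add]
      rw [show n + (l : ℤ) + ((0 : ℕ) : ℤ) - ((0 : ℕ) : ℤ) = n + l by push_cast; ring]
      rw [show (l : ℤ) + ((0 : ℕ) : ℤ) + 1 = (l : ℤ) + 1 by push_cast; ring]
      simpa using hab (l : ℤ)
    | succ m ih =>
      rw [Finset.sum_range_succ']
      have e1 : ∀ i ∈ Finset.range (m + 1),
          a (n + l + ((m + 1 : ℕ) : ℤ) - ((i + 1 : ℕ) : ℤ)) * β ^ (i + 1)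
          = β * (a (n + l + (m : ℤ) - i) * β ^ i) := by
        intro i _
        rw [show n + (l : ℤ) + ((m + 1 : ℕ) : ℤ) - ((i + 1 : ℕ) : ℤ)
            = n + l + (m : ℤ) - i by push_cast; ring]
        ring
      rw [Finset.sum_congr rfl e1, ← Finset.mul_sum, ih]
      have h2 := hab ((l : ℤ) + m + 1)
      rw [show n + (l : ℤ) + ((m + 1 : ℕ) : ℤ) - ((0 : ℕ) : ℤ)
          = n + ((l : ℤ) + m + 1) by push_cast; ring]
      rw [h2]
      rw [show (l : ℤ) + ((m + 1 : ℕ) : ℤ) + 1 = (l : ℤ) + m + 1 + 1 by push_cast; ring]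
      ring
  -- evaluation of P at β
  have hPe : P.eval β = ∑ j ∈ Finset.range (t - l),
      c (j + l + 1) * (b ((l : ℤ) + j + 1) - β ^ (j + 1) * b l) := by
    rw [hP]
    simp only [eval_finset_sum, eval_mul, eval_C, eval_pow, eval_X]
    exact Finset.sum_congr rfl fun j _ => by rw [hS j]
  -- the full linear recurrence for b
  have hBsum : ∑ m ∈ Finset.range (t + 1), c m * b m = 0 := by
    simpa only [hb] using hrec (n + k)
  have hsplit : ∑ m ∈ Finset.range (t + 1), c m * b m
      = ∑ m ∈ Finset.range (l + 1), c m * b m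
        + ∑ j ∈ Finset.range (t - l), c (l + 1 + j) * b ((l : ℤ) + 1 + j) := by
    rw [show t + 1 = (l + 1) + (t - l) by omega, Finset.sum_range_add]
    congr 1
  have hA : ∑ j ∈ Finset.range (t - l), c (l + 1 + j) * b ((l : ℤ) + 1 + j)
      = - ∑ m ∈ Finset.range (l + 1), c m * b m := by
    have h := hBsum
    rw [hsplit] at h
    linear_combination h
  -- f(β) ≠ 0
  have hfβ : (∑ m ∈ Finset.range (t + 1), c m * β ^ m) ≠ 0 := by
    intro hzero
    have hroot : (minpoly F α).IsRoot β := by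
      rw [hmin]
      simp only [IsRoot, eval_add, eval_pow, eval_X, eval_finset_sum, eval_mul, eval_C]
      rw [Finset.sum_range_succ, hct, one_mul] at hzero
      linear_combination hzero
    have hint : IsIntegral F α := .of_finite F α
    have hdeg1 := Polynomial.degree_eq_one_of_irreducible_of_root (minpoly.irreducible hint) hroot
    have h1 : (minpoly F α).natDegree = 1 := natDegree_eq_of_degree_eq_some hdeg1
    omega
  -- P(β) = - b 0 * f(β)
  have hbl0 : b l = β ^ l * b 0 := hbrec l le_rfl
  have hPb : P.eval β = - (b 0 * (∑ m ∈ Finset.range (t + 1), c m * β ^ m)) := by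
    rw [hPe]
    have step1 : ∑ j ∈ Finset.range (t - l),
        c (j + l + 1) * (b ((l : ℤ) + j + 1) - β ^ (j + 1) * b (l : ℤ))
        = ∑ j ∈ Finset.range (t - l),
          (c (l + 1 + j) * b ((l : ℤ) + 1 + j) - c (l + 1 + j) * β ^ (l + 1 + j) * b 0) := by
      refine Finset.sum_congr rfl fun j _ => ?_
      rw [show j + l + 1 = l + 1 + j by ring, show (l : ℤ) + j + 1 = (l : ℤ) + 1 + j by ring,
        hbl0]
      ring
    have hfsplit : ∑ m ∈ Finset.range (t + 1), c m * β ^ m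
        = ∑ m ∈ Finset.range (l + 1), c m * β ^ m
          + ∑ j ∈ Finset.range (t - l), c (l + 1 + j) * β ^ (l + 1 + j) := by
      rw [show t + 1 = (l + 1) + (t - l) by omega]
      exact Finset.sum_range_add _ _ _
    rw [step1, Finset.sum_sub_distrib, hA, hfsplit]
    rw [show ∑ m ∈ Finset.range (l + 1), c m * b m
        = ∑ m ∈ Finset.range (l + 1), c m * β ^ m * b 0 from
      Finset.sum_congr rfl fun m hm => by
        rw [hbrec m (by have := Finset.mem_range.mp hm; omega)]; ring]
    rw [← Finset.sum_mul, ← Finset.sum_mul]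
    ring
  have hiff2 : P.eval β = 0 ↔ b 0 = 0 := by
    rw [hPb, neg_eq_zero, mul_eq_zero]
    constructor
    · rintro (h | h)
      · exact h
      · exact absurd h hfβ
    · exact fun h => Or.inl h
  -- degree computation
  have hQdeg : ∀ j : ℕ,
      (∑ i ∈ Finset.range (j + 1), C (a (n + l + j - i)) * X ^ i).natDegree ≤ j := by
    intro j
    refine natDegree_sum_le_of_forall_le _ _ fun i hi => ?_
    refine (natDegree_C_mul_le _ _).trans ?_
    have := Finset.mem_range.mp hi
    simpa using by omega
  obtain ⟨D, hD⟩ : ∃ D, t - l = D + 1 := ⟨t - l - 1, by omega⟩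
  have hPdeg_le : P.natDegree ≤ D := by
    rw [hP]
    refine natDegree_sum_le_of_forall_le _ _ fun j hj => ?_
    refine (natDegree_C_mul_le _ _).trans ((hQdeg j).trans ?_)
    have := Finset.mem_range.mp hj
    omega
  have hcoe : P.coeff D = a (n + l) := by
    rw [hP, finset_sum_coeff, hD, Finset.sum_range_succ,
      Finset.sum_eq_zero, zero_add]
    · rw [coeff_C_mul, show D + l + 1 = t by omega, hct, one_mul, finset_sum_coeff,
        Finset.sum_range_succ, Finset.sum_eq_zero, zero_add]
      · rw [coeff_C_mul, coeff_X_pow, if_pos rfl, mul_one]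
        congr 1
        push_cast
        ring
      · intro i hi
        have h1 : D ≠ i := (Finset.mem_range.mp hi).ne'
        rw [coeff_C_mul, coeff_X_pow, if_neg h1, mul_zero]
    · intro j hj
      have hjD : j < D := Finset.mem_range.mp hj
      rw [coeff_C_mul, coeff_eq_zero_of_natDegree_lt (lt_of_le_of_lt (hQdeg j) hjD), mul_zero]
  have hdegP : P.natDegree = D :=
    le_antisymm hPdeg_le (le_natDegree_of_ne_zero (by rw [hcoe]; exact hrun.2.2))
  exact ⟨by rw [hdegP]; omega, hiff.trans hiff2.symm⟩
end

section
/- Let t ≥ 3, l ∈ {0, …, t−3}, and suppose C_n^l is a run of zeroes of length l. Let z ≥ 0 be the integer such that a_{n+j·k_β} = 0 for all 1 ≤ j ≤ z and a_{n+(z+1)·k_β} ≠ 0. Then z equals the multiplicity of β as a root of the polynomial P(x) = ∑_{j=0}^{t−l−1} c_{j+l+1} ∑_{i=0}^{j} a_{n+l+j−i} x^i ∈ F_q[x], with the convention c_t = 1. -/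
open Polynomial

section Aux

variable {F E : Type*} [Field F] [Field E] [Algebra F E]

lemma aux_tr_taylor (p : E[X]) (P' : F[X])
    (h : ∀ j, P'.coeff j = Algebra.trace F E (p.coeff j)) (β : F) (m : ℕ) :
    (taylor β P').coeff m
      = Algebra.trace F E ((taylor (algebraMap F E β) p).coeff m) := by
  rw [taylor_coeff, taylor_coeff]
  rw [eval_eq_sum_range' (lt_of_le_of_lt (le_trans (natDegree_hasseDeriv_le _ _) tsub_le_self)
      (lt_of_le_of_lt (le_max_left P'.natDegree p.natDegree) (Nat.lt_succ_self _))) β,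
    eval_eq_sum_range' (lt_of_le_of_lt (le_trans (natDegree_hasseDeriv_le _ _) tsub_le_self)
      (lt_of_le_of_lt (le_max_right P'.natDegree p.natDegree) (Nat.lt_succ_self _)))
      (algebraMap F E β),
    map_sum]
  apply Finset.sum_congr rfl
  intro i _
  rw [hasseDeriv_coeff, hasseDeriv_coeff, h]
  have h2 : ((i + m).choose m : E) * p.coeff (i + m) * algebraMap F E β ^ i
      = (((i + m).choose m : F) * β ^ i) • p.coeff (i + m) := by
    rw [Algebra.smul_def, map_mul, map_natCast, map_pow]
    ring
  rw [h2, map_smul, smul_eq_mul]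
  ring

lemma aux_taylor_pow {R : Type*} [CommRing R] (β : R) (q : R[X]) (e : ℕ) :
    taylor β (q ^ e) = (taylor β q) ^ e := by
  induction e with
  | zero => simp [taylor_one]
  | succ e ih => rw [pow_succ, taylor_mul, ih, pow_succ]

lemma aux_dvd_taylor {R : Type*} [CommRing R] (β : R) (P : R[X]) (e : ℕ) :
    (X - C β) ^ e ∣ P ↔ X ^ e ∣ taylor β P := by
  constructor
  · rintro ⟨q, rfl⟩
    refine ⟨taylor β q, ?_⟩
    rw [taylor_mul, aux_taylor_pow]
    congr 2
    rw [map_sub, taylor_X, taylor_C]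
    ring
  · rintro ⟨q, hq⟩
    refine ⟨taylor (-β) q, ?_⟩
    have : P = taylor (-β) (taylor β P) := by
      rw [taylor_taylor, neg_add_cancel, taylor_zero]
    rw [this, hq, taylor_mul, aux_taylor_pow, taylor_X]
    congr 2
    rw [map_neg]
    ring

end Aux

set_option maxHeartbeats 1000000 in
/-- if `C_n^l` is a run of zeroes of length `l` (with
`0 ≤ l ≤ t-3`), and `z` is the integer with `a (n + j·kβ) = 0` for
`1 ≤ j ≤ z` and `a (n + (z+1)·kβ) ≠ 0`, then `z` is the multiplicity of
`β` as a root of `P(x) = ∑_{j=0}^{t-l-1} c_{j+l+1} ∑_{i=0}^{j} a_{n+l+j-i} x^i`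
(with `c_t = 1`). -/
theorem run_count_eq_rootMultiplicity
    (F E : Type*) [Field F] [Fintype F] [Field E] [Fintype E] [Algebra F E]
    (t : ℕ) (ht : 3 ≤ t) (hrank : Module.finrank F E = t)
    (α : E) (hprim : ∀ x : E, x ≠ 0 → ∃ m : ℕ, α ^ m = x)
    (c : ℕ → F)
    (hmin : minpoly F α = X ^ t + ∑ j ∈ Finset.range t, C (c j) * X ^ j)
    (hct : c t = 1)
    (γ : E) (hγ : γ ≠ 0)
    (a : ℤ → F) (ha : ∀ i : ℤ, a i = Algebra.trace F E (γ * α ^ i))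
    (β : F) (hβ : β ≠ 0)
    (k : ℤ) (hk : α ^ k * (α - algebraMap F E β) = 1)
    (l : ℕ) (hl : l ≤ t - 3)
    (n : ℤ) (hrun : IsRun a (0 : F) n l)
    (z : ℕ)
    (hz1 : ∀ j : ℕ, 1 ≤ j → j ≤ z → a (n + j * k) = 0)
    (hz2 : a (n + (z + 1) * k) ≠ 0)
    (P : Polynomial F)
    (hP : P = ∑ j ∈ Finset.range (t - l), C (c (j + l + 1)) *
        ∑ i ∈ Finset.range (j + 1), C (a (n + l + j - i)) * X ^ i) :
    z = Polynomial.rootMultiplicity β P := by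
  classical
  have hFD : FiniteDimensional F E := FiniteDimensional.of_finrank_pos (by rw [hrank]; omega)
  set φ : F →+* E := algebraMap F E with hφ
  set β' : E := φ β with hβ'
  have hd : α - β' ≠ 0 := fun h => by rw [h, mul_zero] at hk; exact zero_ne_one hk
  have hk1 : α ^ k * (α - β') = 1 := hk
  have hint : IsIntegral F α := IsIntegral.of_finite F α
  have hirr := minpoly.irreducible hint
  have hdeg : (minpoly F α).degree = (t : ℕ) := by
    rw [hmin]
    have h1 : (∑ j ∈ Finset.range t, C (c j) * X ^ j).degree < (X ^ t : F[X]).degree := by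
      rw [degree_X_pow]
      refine lt_of_le_of_lt (degree_sum_le _ _) ?_
      rw [Finset.sup_lt_iff (by exact_mod_cast WithBot.bot_lt_coe t)]
      intro j hj
      exact lt_of_le_of_lt (degree_C_mul_X_pow_le _ _)
        (by exact_mod_cast Finset.mem_range.mp hj)
    rw [degree_add_eq_left_of_degree_lt h1, degree_X_pow]
  have noroot : ∀ x : F, (minpoly F α).eval x ≠ 0 := by
    intro x hx
    have h1 := degree_eq_one_of_irreducible_of_root hirr hx
    rw [hdeg] at h1
    have h2 : t = 1 := by exact_mod_cast h1
    omega
  have hsum0 : α ^ t + ∑ j ∈ Finset.range t, φ (c j) * α ^ j = 0 := by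
    have haev : aeval α (minpoly F α) = 0 := minpoly.aeval F α
    rw [hmin] at haev
    simpa [Algebra.smul_def] using haev
  have hα0 : α ≠ 0 := by
    intro h0
    have hc0 : φ (c 0) = 0 := by
      rw [h0, zero_pow (show t ≠ 0 by omega), Finset.sum_eq_single 0
        (fun b _ hb => by rw [zero_pow hb, mul_zero])
        (fun h => absurd (Finset.mem_range.mpr (by omega)) h)] at hsum0
      simpa using hsum0
    apply noroot 0
    rw [hmin, eval_add, eval_pow, eval_X, zero_pow (show t ≠ 0 by omega), eval_finset_sum,
      Finset.sum_eq_single 0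
        (fun b _ hb => by simp [zero_pow hb])
        (fun h => absurd (Finset.mem_range.mpr (by omega)) h)]
    have : c 0 = 0 := φ.injective (by simpa using hc0)
    simp [this]
  set G : ℕ → E[X] := fun s => ∑ i ∈ Finset.range (s+1), (C α)^i * X^(s-i) with hG
  set HE : E[X] := ∑ s ∈ Finset.range t, C (φ (c (s+1))) * G s with hHE
  set u : E := γ * α ^ (n : ℤ) with hu
  set fE : E[X] := (minpoly F α).map φ with hfE
  have hfE_expand : fE = X^t + ∑ j ∈ Finset.range t, C (φ (c j)) * X^j := by
    rw [hfE, hmin]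
    simp only [Polynomial.map_add, Polynomial.map_pow, Polynomial.map_X, Polynomial.map_sum,
      Polynomial.map_mul, map_C]
  have key1 : (C α - X) * HE = -fE := by
    have hgeom : ∀ s : ℕ, (C α - X) * G s = (C α)^(s+1) - X^(s+1) := by
      intro s
      have h := geom_sum₂_mul (C α) (X : E[X]) (s+1)
      simp only [Nat.add_sub_cancel] at h
      simp only [hG]
      rw [mul_comm]
      exact h
    calc (C α - X) * HE
        = ∑ s ∈ Finset.range t, C (φ (c (s+1))) * ((C α)^(s+1) - X^(s+1)) := by
          rw [hHE, Finset.mul_sum]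
          exact Finset.sum_congr rfl fun s _ => by rw [← hgeom s]; ring
      _ = C (∑ s ∈ Finset.range t, φ (c (s+1)) * α^(s+1))
          - ∑ s ∈ Finset.range t, C (φ (c (s+1))) * X^(s+1) := by
          simp only [mul_sub]
          rw [Finset.sum_sub_distrib, map_sum]
          congr 1
          exact Finset.sum_congr rfl fun s _ => by rw [map_mul, map_pow]
      _ = -fE := by
          have hA : ∑ s ∈ Finset.range t, φ (c (s+1)) * α^(s+1) = -(φ (c 0)) := by
            have h1 : ∑ s ∈ Finset.range (t+1), φ (c s) * α^s = 0 := by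
              rw [Finset.sum_range_succ, hct, map_one, one_mul]
              linear_combination hsum0
            rw [Finset.sum_range_succ'] at h1
            simp only [pow_zero, mul_one] at h1
            linear_combination h1
          have hB : ∑ s ∈ Finset.range t, C (φ (c (s+1))) * X^(s+1) = fE - C (φ (c 0)) := by
            have h1 : ∑ s ∈ Finset.range (t+1), C (φ (c s)) * X^s = fE := by
              rw [Finset.sum_range_succ, hct, map_one, C_1, one_mul, hfE_expand]
              ring
            rw [Finset.sum_range_succ'] at h1
            simp only [pow_zero, mul_one] at h1
            linear_combination h1
          rw [hA, hB, map_neg]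
          ring
  have hHEcoeff : ∀ j : ℕ, HE.coeff j
      = ∑ s ∈ Finset.range t, φ (c (s+1)) * (if j ≤ s then α^(s-j) else 0) := by
    intro j
    rw [hHE, finset_sum_coeff]
    refine Finset.sum_congr rfl fun s _ => ?_
    rw [coeff_C_mul]
    congr 1
    simp only [hG]
    rw [finset_sum_coeff]
    by_cases hjs : j ≤ s
    · rw [if_pos hjs, Finset.sum_eq_single (s - j)]
      · rw [← C_pow, coeff_C_mul, coeff_X_pow, if_pos (by omega), mul_one]
      · intro b hb hbne
        rw [← C_pow, coeff_C_mul, coeff_X_pow,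
          if_neg (by simp only [Finset.mem_range] at hb; omega), mul_zero]
      · intro h
        exact absurd (Finset.mem_range.mpr (by omega)) h
    · rw [if_neg hjs]
      refine Finset.sum_eq_zero fun b hb => ?_
      rw [← C_pow, coeff_C_mul, coeff_X_pow,
        if_neg (by simp only [Finset.mem_range] at hb; omega), mul_zero]
  have hPcoeff : ∀ j : ℕ, P.coeff j
      = ∑ s ∈ Finset.range t, c (s+1) * (if j ≤ s then a (n + ((s - j : ℕ) : ℤ)) else 0) := by
    intro j
    have hstep1 : P.coeff j = ∑ j' ∈ Finset.range (t - l),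
        c (j' + l + 1) * (if j ≤ j' then a (n + l + j' - j) else 0) := by
      rw [hP, finset_sum_coeff]
      refine Finset.sum_congr rfl fun j' _ => ?_
      rw [coeff_C_mul]
      congr 1
      rw [finset_sum_coeff]
      simp only [coeff_C_mul, coeff_X_pow, mul_ite, mul_one, mul_zero]
      rw [Finset.sum_ite_eq (Finset.range (j' + 1)) j (fun i => a (n + l + j' - i))]
      simp only [Finset.mem_range]
      by_cases hjj : j ≤ j'
      · rw [if_pos (by omega), if_pos hjj]
      · rw [if_neg (by omega), if_neg hjj]
    rw [hstep1]
    have hstep2 : ∀ s ∈ Finset.range t,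
        c (s+1) * (if j ≤ s then a (n + ((s - j : ℕ) : ℤ)) else 0)
        = c (s+1) * (if l + j ≤ s then a (n + ((s - j : ℕ) : ℤ)) else 0) := by
      intro s _
      by_cases h1 : l + j ≤ s
      · rw [if_pos h1, if_pos (by omega)]
      · by_cases h2 : j ≤ s
        · rw [if_pos h2, if_neg h1, hrun.1 (s - j) (by omega)]
        · rw [if_neg h2, if_neg h1]
    calc ∑ j' ∈ Finset.range (t - l),
          c (j' + l + 1) * (if j ≤ j' then a (n + l + j' - j) else 0)
        = ∑ i ∈ Finset.range (t - l),
            c (l + i + 1) * (if l + j ≤ l + i then a (n + ((l + i - j : ℕ) : ℤ)) else 0) := by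
          refine Finset.sum_congr rfl fun i _ => ?_
          rw [show i + l + 1 = l + i + 1 by omega]
          congr 1
          by_cases hji : j ≤ i
          · rw [if_pos hji, if_pos (show l + j ≤ l + i by omega)]
            congr 1
            push_cast [show l + i - j = l + (i - j) by omega]
            omega
          · rw [if_neg hji, if_neg (show ¬ l + j ≤ l + i by omega)]
      _ = ∑ s ∈ Finset.Ico l t,
            c (s + 1) * (if l + j ≤ s then a (n + ((s - j : ℕ) : ℤ)) else 0) := by
          rw [Finset.sum_Ico_eq_sum_range]
      _ = ∑ s ∈ Finset.range t,
            c (s + 1) * (if l + j ≤ s then a (n + ((s - j : ℕ) : ℤ)) else 0) := by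
          rw [← Finset.sum_range_add_sum_Ico
            (fun s => c (s + 1) * (if l + j ≤ s then a (n + ((s - j : ℕ) : ℤ)) else 0))
            (show l ≤ t by omega)]
          have h0 : ∑ s ∈ Finset.range l,
              c (s + 1) * (if l + j ≤ s then a (n + ((s - j : ℕ) : ℤ)) else 0) = 0 :=
            Finset.sum_eq_zero fun s hs => by
              rw [if_neg (by simp only [Finset.mem_range] at hs; omega), mul_zero]
          rw [h0, zero_add]
      _ = ∑ s ∈ Finset.range t, c (s+1) * (if j ≤ s then a (n + ((s - j : ℕ) : ℤ)) else 0) :=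
          (Finset.sum_congr rfl hstep2).symm
  have hzpadd : ∀ m : ℕ, u * α ^ m = γ * α ^ (n + (m : ℤ)) := by
    intro m
    rw [hu, zpow_add₀ hα0, zpow_natCast, mul_assoc]
  have htr : ∀ j : ℕ, P.coeff j = Algebra.trace F E ((C u * HE).coeff j) := by
    intro j
    rw [coeff_C_mul, hHEcoeff j, Finset.mul_sum, map_sum, hPcoeff j]
    refine Finset.sum_congr rfl fun s _ => ?_
    by_cases hjs : j ≤ s
    · rw [if_pos hjs, if_pos hjs]
      have h2 : u * (φ (c (s+1)) * α ^ (s - j)) = c (s+1) • (u * α ^ (s - j)) := by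
        rw [Algebra.smul_def]
        ring
      rw [h2, map_smul, smul_eq_mul, hzpadd, ← ha]
    · rw [if_neg hjs, if_neg hjs]
      simp
  set Q : E[X] := taylor β' (C u * HE) with hQdef
  set R : E[X] := taylor β' fE with hRdef
  have hQR : (C (α - β') - X) * Q = -(C u) * R := by
    have h2 : (C α - X) * (C u * HE) = C (-u) * fE := by
      calc (C α - X) * (C u * HE) = C u * ((C α - X) * HE) := by ring
        _ = C (-u) * fE := by rw [key1, map_neg]; ring
    have h3 : (C α - (X + C β')) * Q = C (-u) * R := by
      rw [hQdef, hRdef, show C α - (X + C β') = taylor β' (C α - X) by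
          rw [map_sub, taylor_C, taylor_X],
        show (C (-u) : E[X]) = taylor β' (C (-u)) by rw [taylor_C],
        ← taylor_mul, ← taylor_mul, h2]
    calc (C (α - β') - X) * Q = (C α - (X + C β')) * Q := by rw [map_sub]; ring
      _ = C (-u) * R := h3
      _ = -(C u) * R := by rw [map_neg]
  have hRcoeff : ∀ i : ℕ, R.coeff i = φ ((taylor β (minpoly F α)).coeff i) := by
    have hmapR : R = ((taylor β (minpoly F α)).map φ) := by
      rw [hRdef, hfE, taylor_apply, taylor_apply, Polynomial.map_comp, Polynomial.map_add,
        Polynomial.map_X, map_C]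
    intro i
    rw [hmapR, coeff_map]
  have hQ : ∀ m : ℕ, Q.coeff m
      = -(u * ∑ i ∈ Finset.range (m+1), R.coeff i * (α^k)^(m - i + 1)) := by
    have hrec0 : (α - β') * Q.coeff 0 = -(u * R.coeff 0) := by
      have e1 : ((C (α - β') - X) * Q).coeff 0 = ((-(C u)) * R).coeff 0 := by rw [hQR]
      simp only [sub_mul, coeff_sub, coeff_C_mul, mul_coeff_zero, coeff_X_zero, zero_mul,
        sub_zero, neg_mul, coeff_neg, coeff_C_zero] at e1
      linear_combination e1
    have hrecS : ∀ m : ℕ, (α - β') * Q.coeff (m+1) - Q.coeff m = -(u * R.coeff (m+1)) := by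
      intro m
      have e1 : ((C (α - β') - X) * Q).coeff (m+1) = ((-(C u)) * R).coeff (m+1) := by rw [hQR]
      simp only [sub_mul, coeff_sub, coeff_C_mul, coeff_X_mul, neg_mul, coeff_neg] at e1
      linear_combination e1
    intro m
    induction m with
    | zero =>
      rw [Finset.sum_range_one]
      norm_num
      linear_combination (α ^ k) * hrec0 - Q.coeff 0 * hk1
    | succ m ih =>
      have hsum : ∑ i ∈ Finset.range (m+1+1), R.coeff i * (α^k)^(m + 1 - i + 1)
          = (∑ i ∈ Finset.range (m+1), R.coeff i * (α^k)^(m - i + 1)) * α^k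
            + R.coeff (m+1) * (α^k) := by
        rw [Finset.sum_range_succ, Finset.sum_mul]
        congr 1
        · refine Finset.sum_congr rfl fun i hi => ?_
          have hi' : i ≤ m := by simpa [Nat.lt_succ_iff] using hi
          rw [show m + 1 - i + 1 = (m - i + 1) + 1 by omega, pow_succ, mul_assoc]
        · rw [show m + 1 - (m+1) + 1 = 1 by omega, pow_one]
      rw [hsum]
      have e1 := hrecS m
      linear_combination (α ^ k) * e1 + (α ^ k) * ih - Q.coeff (m+1) * hk1
  have hkey : ∀ m : ℕ, (taylor β P).coeff m
      = -∑ i ∈ Finset.range (m+1), (taylor β (minpoly F α)).coeff i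
          * a (n + ((m - i + 1 : ℕ) : ℤ) * k) := by
    intro m
    rw [aux_tr_taylor (C u * HE) P htr β m, ← hφ, ← hβ', ← hQdef, hQ m, map_neg, Finset.mul_sum,
      map_sum]
    refine congrArg Neg.neg ?_
    refine Finset.sum_congr rfl fun i hi => ?_
    rw [hRcoeff i]
    have h2 : u * (φ ((taylor β (minpoly F α)).coeff i) * (α^k)^(m-i+1))
        = ((taylor β (minpoly F α)).coeff i) • (u * (α^k)^(m-i+1)) := by
      rw [Algebra.smul_def]
      ring
    have h3 : u * (α^k)^(m-i+1) = γ * α ^ (n + ((m - i + 1 : ℕ) : ℤ) * k) := by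
      rw [hu, mul_assoc]
      congr 1
      rw [← zpow_natCast (α^k) (m-i+1), ← zpow_mul, ← zpow_add₀ hα0]
      congr 1
      ring
    rw [h2, map_smul, smul_eq_mul, h3, ha]
  have hvanish : ∀ m : ℕ, m < z → (taylor β P).coeff m = 0 := by
    intro m hm
    rw [hkey m, Finset.sum_eq_zero, neg_zero]
    intro i hi
    rw [hz1 (m - i + 1) (by omega) (by omega), mul_zero]
  have hnz : (taylor β P).coeff z ≠ 0 := by
    have hz2' : a (n + ((z + 1 : ℕ) : ℤ) * k) ≠ 0 := by push_cast; exact hz2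
    rw [hkey z, Finset.sum_range_succ']
    have hz' : ∀ i ∈ Finset.range z, (taylor β (minpoly F α)).coeff (i+1)
        * a (n + ((z - (i+1) + 1 : ℕ) : ℤ) * k) = 0 := by
      intro i hi
      simp only [Finset.mem_range] at hi
      rw [hz1 (z - (i+1) + 1) (by omega) (by omega), mul_zero]
    rw [Finset.sum_eq_zero hz', zero_add]
    simp only [Nat.sub_zero, taylor_coeff_zero]
    exact neg_ne_zero.mpr (mul_ne_zero (noroot β) hz2')
  have hP0 : P ≠ 0 := by
    intro h
    apply hnz
    rw [h, map_zero, coeff_zero]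
  have h1 : (X - C β) ^ z ∣ P :=
    (aux_dvd_taylor β P z).mpr (X_pow_dvd_iff.mpr fun d hd' => hvanish d hd')
  have h2 : ¬ (X - C β) ^ (z + 1) ∣ P := fun h =>
    hnz (X_pow_dvd_iff.mp ((aux_dvd_taylor β P (z+1)).mp h) z (Nat.lt_succ_self z))
  exact le_antisymm ((le_rootMultiplicity_iff hP0).mpr h1)
    ((rootMultiplicity_le_iff hP0 β z).mpr h2)
end

section
/- Let t ≥ 3, l ∈ {0, …, t−3}, and suppose C_n^l is a run of zeroes of length l and C_{n+k_β}^{l+1} is a run of zeroes of length l+1. Then P(x) = (x − β)·P_β(x), where P(x) = ∑_{j=0}^{t−l−1} c_{j+l+1} ∑_{i=0}^{j} a_{n+l+j−i} x^i and P_β(x) = ∑_{j=0}^{t−l−2} c_{j+l+2} ∑_{i=0}^{j} a_{n+k_β+l+1+j−i} x^i, both in F_q[x], with the convention c_t = 1. -/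
open Polynomial

private lemma aux_sum_range_add {M : Type*} [AddCommMonoid M] (f : ℕ → M) (m n : ℕ) :
    ∑ i ∈ Finset.range (m + n), f i
      = (∑ i ∈ Finset.range m, f i) + ∑ i ∈ Finset.range n, f (m + i) := by
  induction n with
  | zero => simp
  | succ n ih =>
      rw [← Nat.add_assoc, Finset.sum_range_succ, ih, Finset.sum_range_succ, add_assoc]

/-- if `C_n^l` is a run of zeroes of length `l` (with
`0 ≤ l ≤ t-3`) and `C_{n+kβ}^{l+1}` is a run of zeroes of length `l+1`, then
`P(x) = (x - β)·P_β(x)`, where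
`P(x) = ∑_{j=0}^{t-l-1} c_{j+l+1} ∑_{i=0}^{j} a_{n+l+j-i} x^i` and
`P_β(x) = ∑_{j=0}^{t-l-2} c_{j+l+2} ∑_{i=0}^{j} a_{n+kβ+l+1+j-i} x^i`
(with `c_t = 1`). -/
theorem poly_factorization_of_run_extension
    (F E : Type*) [Field F] [Fintype F] [Field E] [Fintype E] [Algebra F E]
    (t : ℕ) (ht : 3 ≤ t) (hrank : Module.finrank F E = t)
    (α : E) (hprim : ∀ x : E, x ≠ 0 → ∃ m : ℕ, α ^ m = x)
    (c : ℕ → F)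
    (hmin : minpoly F α = X ^ t + ∑ j ∈ Finset.range t, C (c j) * X ^ j)
    (hct : c t = 1)
    (γ : E) (hγ : γ ≠ 0)
    (a : ℤ → F) (ha : ∀ i : ℤ, a i = Algebra.trace F E (γ * α ^ i))
    (β : F) (hβ : β ≠ 0)
    (k : ℤ) (hk : α ^ k * (α - algebraMap F E β) = 1)
    (l : ℕ) (hl : l ≤ t - 3)
    (n : ℤ) (hrun : IsRun a (0 : F) n l)
    (hrun' : IsRun a (0 : F) (n + k) (l + 1))
    (P Pβ : Polynomial F)
    (hP : P = ∑ j ∈ Finset.range (t - l), C (c (j + l + 1)) *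
        ∑ i ∈ Finset.range (j + 1), C (a (n + l + j - i)) * X ^ i)
    (hPβ : Pβ = ∑ j ∈ Finset.range (t - l - 1), C (c (j + l + 2)) *
        ∑ i ∈ Finset.range (j + 1), C (a (n + k + l + 1 + j - i)) * X ^ i) :
    P = (X - C β) * Pβ := by
  classical
  have hlt : l + 3 ≤ t := by omega
  -- α is nonzero
  have hα : α ≠ 0 := by
    intro h0
    have hall : ∀ x : E, x = 0 ∨ x = 1 := by
      intro x
      by_cases hx0 : x = 0
      · exact Or.inl hx0
      · obtain ⟨m, hm⟩ := hprim x hx0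
        rw [h0] at hm
        cases m with
        | zero => exact Or.inr (by simpa using hm.symm)
        | succ m =>
            exfalso
            apply hx0
            rw [← hm, pow_succ, mul_zero]
    have hle : Fintype.card E ≤ 2 := by
      have hsub : (Finset.univ : Finset E) ⊆ ({0, 1} : Finset E) := by
        intro x _
        rcases hall x with h | h <;> simp [h]
      calc Fintype.card E = (Finset.univ : Finset E).card := rfl
        _ ≤ ({0, 1} : Finset E).card := Finset.card_le_card hsub
        _ ≤ 2 := Finset.card_insert_le 0 {1}
    have hcard : Fintype.card E = Fintype.card F ^ t := by
      rw [Module.card_eq_pow_finrank (K := F) (V := E), hrank]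
    have hF : 2 ≤ Fintype.card F := Fintype.one_lt_card
    have : 2 ^ 3 ≤ Fintype.card F ^ t :=
      le_trans (Nat.pow_le_pow_right (by norm_num) ht) (Nat.pow_le_pow_left hF t)
    omega
  -- the trace sequence is F-linear in its field argument
  have htr : ∀ (r : F) (x y : E),
      Algebra.trace F E (x - algebraMap F E r * y)
        = Algebra.trace F E x - r * Algebra.trace F E y := by
    intro r x y
    rw [← Algebra.smul_def, map_sub, map_smul, smul_eq_mul]
  -- key relation : a z = a (z+k+1) - β * a (z+k)
  have key : ∀ z : ℤ, a z = a (z + k + 1) - β * a (z + k) := by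
    intro z
    have hpow : α ^ z = α ^ (z + k + 1) - algebraMap F E β * α ^ (z + k) := by
      have h1 : α ^ (z + k + 1) = α ^ z * α ^ k * α := by
        rw [zpow_add₀ hα, zpow_add₀ hα, zpow_one]
      have h2 : α ^ (z + k) = α ^ z * α ^ k := zpow_add₀ hα z k
      rw [h1, h2]
      calc α ^ z = α ^ z * (α ^ k * (α - algebraMap F E β)) := by rw [hk, mul_one]
        _ = α ^ z * α ^ k * α - algebraMap F E β * (α ^ z * α ^ k) := by ring
    rw [ha z, ha (z + k + 1), ha (z + k), hpow]
    rw [show γ * (α ^ (z + k + 1) - algebraMap F E β * α ^ (z + k))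
        = γ * α ^ (z + k + 1) - algebraMap F E β * (γ * α ^ (z + k)) by ring]
    exact htr β _ _
  -- linear recurrence : ∑_{s=0}^{t} c s * a (z + s) = 0
  have hrec : ∀ z : ℤ, ∑ s ∈ Finset.range (t + 1), c s * a (z + s) = 0 := by
    intro z
    have haev : (Polynomial.aeval α) (minpoly F α) = 0 := minpoly.aeval F α
    rw [hmin] at haev
    simp only [map_add, map_pow, map_sum, map_mul, aeval_X, aeval_C] at haev
    -- haev : α ^ t + ∑ j ∈ range t, algebraMap F E (c j) * α ^ j = 0
    have hzero : ∑ s ∈ Finset.range (t + 1), algebraMap F E (c s) * α ^ s = 0 := by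
      rw [Finset.sum_range_succ, hct, map_one, one_mul, add_comm]
      exact haev
    have : ∑ s ∈ Finset.range (t + 1), (c s) • (γ * α ^ z * α ^ s) = 0 := by
      have : ∑ s ∈ Finset.range (t + 1), (c s) • (γ * α ^ z * α ^ s)
          = γ * α ^ z * ∑ s ∈ Finset.range (t + 1), algebraMap F E (c s) * α ^ s := by
        rw [Finset.mul_sum]
        refine Finset.sum_congr rfl fun s _ => ?_
        rw [Algebra.smul_def]
        ring
      rw [this, hzero, mul_zero]
    calc ∑ s ∈ Finset.range (t + 1), c s * a (z + s)
        = Algebra.trace F E (∑ s ∈ Finset.range (t + 1), (c s) • (γ * α ^ z * α ^ s)) := by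
          rw [map_sum]
          refine Finset.sum_congr rfl fun s _ => ?_
          rw [map_smul, smul_eq_mul, ha]
          congr 2
          rw [zpow_add₀ hα, zpow_natCast]
          ring
      _ = 0 := by rw [this, map_zero]
  -- zeroes from the second run
  have hz' : ∀ j : ℕ, j ≤ l → a (n + k + j) = 0 := fun j hj => hrun'.1 j (by omega)
  have hd0 : a (n + k + l) = 0 := hz' l le_rfl
  -- abbreviations for the inner polynomials
  set S : ℕ → Polynomial F := fun j =>
    ∑ i ∈ Finset.range (j + 1), C (a (n + l + j - i)) * X ^ i with hSdef
  set T : ℕ → Polynomial F := fun j =>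
    ∑ i ∈ Finset.range (j + 1), C (a (n + k + l + 1 + j - i)) * X ^ i with hTdef
  -- T recursion
  have hTsucc : ∀ m : ℕ, T (m + 1) = X * T m + C (a (n + k + l + 1 + (m + 1 : ℕ))) := by
    intro m
    rw [hTdef]
    simp only
    rw [Finset.sum_range_succ' (fun i => C (a (n + k + l + 1 + (m + 1 : ℕ) - i)) * X ^ i) (m + 1)]
    rw [Finset.mul_sum]
    congr 1
    · refine Finset.sum_congr rfl fun i _ => ?_
      rw [pow_succ]
      rw [show (n + k + l + 1 + (m + 1 : ℕ) - (i + 1 : ℕ) : ℤ)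
          = n + k + l + 1 + (m : ℕ) - (i : ℕ) by push_cast; ring]
      ring
    · simp
  -- S in terms of T
  have hST : ∀ m : ℕ, S (m + 1) = (X - C β) * T m + C (a (n + k + l + 1 + (m + 1 : ℕ))) := by
    intro m
    have hsplit : S (m + 1)
        = (∑ i ∈ Finset.range (m + 2), C (a (n + k + l + 1 + (m + 1 : ℕ) - i)) * X ^ i)
          - C β * ∑ i ∈ Finset.range (m + 2), C (a (n + k + l + (m + 1 : ℕ) - i)) * X ^ i := by
      rw [hSdef]
      simp only
      rw [Finset.mul_sum, ← Finset.sum_sub_distrib]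
      refine Finset.sum_congr rfl fun i _ => ?_
      have := key (n + l + (m + 1 : ℕ) - i)
      rw [show (n + l + (m + 1 : ℕ) - i + k + 1 : ℤ) = n + k + l + 1 + (m + 1 : ℕ) - i by ring,
          show (n + l + (m + 1 : ℕ) - i + k : ℤ) = n + k + l + (m + 1 : ℕ) - i by ring] at this
      rw [this, map_sub, map_mul]
      ring
    have hsecond : ∑ i ∈ Finset.range (m + 2), C (a (n + k + l + (m + 1 : ℕ) - i)) * X ^ i
        = T m := by
      rw [Finset.sum_range_succ]
      rw [show (n + k + l + (m + 1 : ℕ) - (m + 1 : ℕ) : ℤ) = n + k + l by push_cast; ring]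
      rw [hd0, map_zero, zero_mul, add_zero, hTdef]
      refine Finset.sum_congr rfl fun i _ => ?_
      rw [show (n + k + l + (m + 1 : ℕ) - i : ℤ) = n + k + l + 1 + (m : ℕ) - i by push_cast; ring]
    have hfirst : ∑ i ∈ Finset.range (m + 2), C (a (n + k + l + 1 + (m + 1 : ℕ) - i)) * X ^ i
        = T (m + 1) := by rw [hTdef]
    rw [hsplit, hfirst, hsecond, hTsucc m]
    ring
  -- S 0
  have hS0 : S 0 = C (a (n + k + l + 1)) := by
    have hkey := key (n + l)
    rw [show (n + l + k + 1 : ℤ) = n + k + l + 1 by ring,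
        show (n + l + k : ℤ) = n + k + l by ring, hd0, mul_zero, sub_zero] at hkey
    rw [hSdef]
    simp only [zero_add, Finset.sum_range_one, Nat.cast_zero, sub_zero, add_zero, pow_zero,
      mul_one, hkey]
  -- the constant terms sum to zero
  have hB : ∑ j ∈ Finset.range (t - l), c (j + l + 1) * a (n + k + l + 1 + j) = 0 := by
    have h0 := hrec (n + k)
    rw [show t + 1 = (l + 1) + (t - l) by omega,
        aux_sum_range_add (fun s => c s * a (n + k + s)) (l + 1) (t - l)] at h0
    have hzl : ∑ s ∈ Finset.range (l + 1), c s * a (n + k + s) = 0 := by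
      refine Finset.sum_eq_zero fun s hs => ?_
      rw [hz' s (by simpa using Nat.lt_succ_iff.mp (Finset.mem_range.mp hs)), mul_zero]
    rw [hzl, zero_add] at h0
    rw [← h0]
    refine Finset.sum_congr rfl fun j _ => ?_
    rw [show l + 1 + j = j + l + 1 by ring]
    congr 2
    push_cast
    ring
  -- main computation
  have hPS : P = ∑ j ∈ Finset.range (t - l), C (c (j + l + 1)) * S j := hP
  have hPβT : Pβ = ∑ j ∈ Finset.range (t - l - 1), C (c (j + l + 2)) * T j := hPβ
  rw [hPS, hPβT]
  rw [show t - l = (t - l - 1) + 1 by omega,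
      Finset.sum_range_succ' (fun j => C (c (j + l + 1)) * S j) (t - l - 1)]
  simp only [hST, hS0]
  simp only [zero_add]
  have hexp : ∀ m : ℕ, C (c (m + 1 + l + 1)) * ((X - C β) * T m + C (a (n + k + l + 1 + (m + 1 : ℕ))))
      = (X - C β) * (C (c (m + l + 2)) * T m)
        + C (c (m + 1 + l + 1) * a (n + k + l + 1 + (m + 1 : ℕ))) := by
    intro m
    rw [show m + 1 + l + 1 = m + l + 2 by ring, map_mul]
    ring
  rw [Finset.sum_congr rfl (fun m _ => hexp m), Finset.sum_add_distrib, ← Finset.mul_sum]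
  rw [← map_mul]
  have hcsum : (∑ m ∈ Finset.range (t - l - 1),
        C (c (m + 1 + l + 1) * a (n + k + l + 1 + (m + 1 : ℕ))))
      + C (c (l + 1) * a (n + k + l + 1)) = 0 := by
    rw [← map_sum, ← map_add]
    have harg : (∑ m ∈ Finset.range (t - l - 1),
          c (m + 1 + l + 1) * a (n + k + l + 1 + (m + 1 : ℕ)))
        + c (l + 1) * a (n + k + l + 1) = 0 := by
      rw [← hB, show t - l = (t - l - 1) + 1 by omega,
          Finset.sum_range_succ' (fun j => c (j + l + 1) * a (n + k + l + 1 + j)) (t - l - 1)]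
      norm_num
    rw [harg, map_zero]
  rw [add_assoc, hcsum, add_zero]
  congr 2
end

section
/- Let l ∈ {1, …, t−1} and let k_1 ∈ ℤ satisfy α^{k_1}(α − 1) = 1. Let Z_l be the set of residues n ∈ ℤ/(q^t−1) such that C_n^l is a run of zeroes of length l, and let N_l be the set of residues n ∈ ℤ/(q^t−1) such that C_n^{l'} is a run of some nonzero element of F_q of length l' for some l' > l. Then the map sending n ∈ Z_l to n + j·k_1 (mod q^t−1), where j ≥ 1 is the least positive integer with a_{n+j·k_1} ≠ 0, is a well-defined bijection from Z_l onto N_l; in particular, for each n ∈ Z_l the difference between the start of the corresponding nonzero run and n is a multiple of k_1. -/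
/-- for `1 ≤ l ≤ t-1`, the map sending the starting residue `n`
(mod `q^t - 1`) of a run of zeroes of length `l` to `n + j·k₁`, where `j ≥ 1`
is least with `a (n + j·k₁) ≠ 0`, is a well-defined bijection from the set
`Z_l` of starting residues of runs of zeroes of length `l` onto the set `N_l`
of starting residues of runs of nonzero elements of length `> l`; in
particular the difference between the start of the corresponding nonzero run
and `n` is a multiple of `k₁`. -/
theorem run_bijection
    (F E : Type*) [Field F] [Fintype F] [Field E] [Fintype E] [Algebra F E]
    (t : ℕ) (ht : 2 ≤ t) (hrank : Module.finrank F E = t)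
    (α : E) (hprim : ∀ x : E, x ≠ 0 → ∃ m : ℕ, α ^ m = x)
    (hdeg : (minpoly F α).natDegree = t)
    (γ : E) (hγ : γ ≠ 0)
    (a : ℤ → F) (ha : ∀ i : ℤ, a i = Algebra.trace F E (γ * α ^ i))
    (k : ℤ) (hk : α ^ k * (α - 1) = 1)
    (l : ℕ) (hl1 : 1 ≤ l) (hl2 : l ≤ t - 1) :
    ∃ g : ZMod (Fintype.card F ^ t - 1) → ZMod (Fintype.card F ^ t - 1),
      Set.BijOn g
        {x | ∃ n : ℤ, (n : ZMod (Fintype.card F ^ t - 1)) = x ∧ IsRun a (0 : F) n l}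
        {x | ∃ n : ℤ, (n : ZMod (Fintype.card F ^ t - 1)) = x ∧
            ∃ δ : F, δ ≠ 0 ∧ ∃ l' : ℕ, l < l' ∧ IsRun a δ n l'} ∧
      ∀ n : ℤ, IsRun a (0 : F) n l →
        ∃ j : ℕ, 1 ≤ j ∧
          (∀ j' : ℕ, 1 ≤ j' → j' < j → a (n + j' * k) = 0) ∧
          a (n + j * k) ≠ 0 ∧
          g (n : ZMod (Fintype.card F ^ t - 1))
            = ((n + j * k : ℤ) : ZMod (Fintype.card F ^ t - 1)) := by
  classical
  set N := Fintype.card F ^ t - 1 with hNdef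
  -- α is nonzero
  have hα0 : α ≠ 0 := by
    intro h
    rw [h, minpoly.zero, Polynomial.natDegree_X] at hdeg
    omega
  -- the basic difference identity
  have hdiff : ∀ i : ℤ, a (i + k + 1) - a (i + k) = a i := by
    intro i
    rw [ha, ha, ha, ← map_sub]
    congr 1
    rw [zpow_add₀ hα0 (i + k) 1, zpow_add₀ hα0 i k, zpow_one]
    linear_combination (γ * α ^ i) * hk
  -- periodicity
  have hcardE : Fintype.card E = Fintype.card F ^ t := by
    rw [← hrank]; exact Module.card_eq_pow_finrank
  have hαN : α ^ ((N : ℕ) : ℤ) = 1 := by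
    rw [zpow_natCast, hNdef, ← hcardE]
    exact FiniteField.pow_card_sub_one_eq_one α hα0
  have hper : ∀ i i' : ℤ, ((i : ZMod N) = (i' : ZMod N)) → a i = a i' := by
    intro i i' h
    obtain ⟨c, hc⟩ := ((ZMod.intCast_eq_intCast_iff _ _ _).mp h).dvd
    have : i' = i + (N : ℤ) * c := by linarith
    rw [this, ha, ha]
    congr 1
    rw [zpow_add₀ hα0, zpow_mul, hαN, one_zpow, mul_one]
  -- nondegeneracy: within any window of length t there is a nonzero value
  have hkey : ∀ n : ℤ, ∃ j : ℕ, j < t ∧ a (n + j) ≠ 0 := by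
    intro n
    by_contra hcon
    push_neg at hcon
    have hβ : γ * α ^ n ≠ 0 := mul_ne_zero hγ (zpow_ne_zero _ hα0)
    have hli := linearIndependent_pow (K := F) α
    rw [hdeg] at hli
    have hcard' : Fintype.card (Fin t) = Module.finrank F E := by simp [hrank]
    have hne : Nonempty (Fin t) := ⟨⟨0, by omega⟩⟩
    let B := basisOfLinearIndependentOfCardEqFinrank hli hcard'
    have hB : ∀ i : Fin t, B i = α ^ (i : ℕ) := fun i => by
      rw [show B = basisOfLinearIndependentOfCardEqFinrank hli hcard' from rfl,
        coe_basisOfLinearIndependentOfCardEqFinrank]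
    have h0 : Algebra.traceForm F E (γ * α ^ n) = 0 := by
      apply B.ext
      intro i
      rw [hB i]
      simp only [Algebra.traceForm_apply, LinearMap.zero_apply]
      have e : γ * α ^ n * (α ^ (i : ℕ)) = γ * α ^ (n + (i : ℕ)) := by
        rw [zpow_add₀ hα0, zpow_natCast]; ring
      rw [e, ← ha]
      exact hcon i i.2
    exact hβ ((traceForm_nondegenerate F E).1 _
      (fun y => by rw [h0]; simp))
  -- basic run lemmas
  have runValue : ∀ (δ : F) (n : ℤ) (L : ℕ), IsRun a δ n L → 1 ≤ L → a n = δ := by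
    intro δ n L h hL
    simpa using h.1 0 hL
  have runBound : ∀ (n : ℤ) (L : ℕ), IsRun a 0 n L → L < t := by
    intro n L h
    by_contra hge
    push_neg at hge
    obtain ⟨j, hj, hne⟩ := hkey n
    exact hne (h.1 j (lt_of_lt_of_le hj hge))
  have runLenUnique : ∀ (δ δ' : F) (n : ℤ) (L L' : ℕ), 1 ≤ L → 1 ≤ L' →
      IsRun a δ n L → IsRun a δ' n L' → L = L' := by
    intro δ δ' n L L' hL hL' h h'
    have hδ : δ = δ' := by rw [← runValue δ n L h hL, runValue δ' n L' h' hL']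
    subst hδ
    rcases lt_trichotomy L L' with hlt | heq | hgt
    · exact absurd (h'.1 L hlt) h.2.2
    · exact heq
    · exact absurd (h.1 L' hgt) h'.2.2
  -- shifting a zero run forward by k
  have shiftRun : ∀ (n : ℤ) (L : ℕ), IsRun a 0 n L →
      IsRun a (a (n + k)) (n + k) (L + 1) := by
    intro n L h
    have hconst : ∀ j : ℕ, j ≤ L → a (n + k + j) = a (n + k) := by
      intro j hj
      induction j with
      | zero => simp
      | succ m ih =>
        have hm : a (n + m) = 0 := h.1 m (by omega)
        have hd := hdiff (n + m)
        rw [hm] at hd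
        have e1 : n + (m : ℤ) + k + 1 = n + k + ((m + 1 : ℕ) : ℤ) := by push_cast; ring
        have e2 : n + (m : ℤ) + k = n + k + (m : ℤ) := by ring
        rw [e1, e2, sub_eq_zero] at hd
        rw [hd, ih (by omega)]
    refine ⟨fun j hj => hconst j (by omega), ?_, ?_⟩
    · have hd := hdiff (n - 1)
      have e1 : n - 1 + k + 1 = n + k := by ring
      have e2 : n - 1 + k = n + k - 1 := by ring
      rw [e1, e2] at hd
      intro hEq
      apply h.2.1
      rw [← hd, hEq, sub_self]
    · have hd := hdiff (n + L)
      have e1 : n + (L : ℤ) + k + 1 = n + k + ((L + 1 : ℕ) : ℤ) := by push_cast; ring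
      have e2 : n + (L : ℤ) + k = n + k + (L : ℤ) := by ring
      rw [e1, e2] at hd
      intro hEq
      apply h.2.2
      rw [← hd, hEq, hconst L le_rfl, sub_self]
  -- shifting a constant run backward by k
  have backRun : ∀ (m : ℤ) (δ : F) (L : ℕ), IsRun a δ m (L + 1) →
      IsRun a 0 (m - k) L := by
    intro m δ L h
    refine ⟨?_, ?_, ?_⟩
    · intro j hj
      have hd := hdiff (m - k + j)
      have e1 : m - k + (j : ℤ) + k + 1 = m + ((j + 1 : ℕ) : ℤ) := by push_cast; ring
      have e2 : m - k + (j : ℤ) + k = m + (j : ℤ) := by ring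
      rw [e1, e2] at hd
      rw [← hd, h.1 (j + 1) (by omega), h.1 j (by omega), sub_self]
    · have hd := hdiff (m - k - 1)
      have e1 : m - k - 1 + k + 1 = m + ((0 : ℕ) : ℤ) := by push_cast; ring
      have e2 : m - k - 1 + k = m - 1 := by ring
      rw [e1, e2] at hd
      intro h0
      apply h.2.1
      rw [h0, sub_eq_zero] at hd
      rw [← hd]
      exact h.1 0 (by omega)
    · intro h0
      have hd := hdiff (m - k + L)
      have e1 : m - k + (L : ℤ) + k + 1 = m + ((L + 1 : ℕ) : ℤ) := by push_cast; ring
      have e2 : m - k + (L : ℤ) + k = m + (L : ℤ) := by ring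
      rw [e1, e2, h0, sub_eq_zero] at hd
      apply h.2.2
      rw [hd]
      exact h.1 L (by omega)
  -- iterated backward shifting of zero runs
  have bwdZero : ∀ (i : ℕ) (m : ℤ) (L : ℕ), i ≤ L → IsRun a 0 m L →
      IsRun a 0 (m - i * k) (L - i) := by
    intro i
    induction i with
    | zero => intro m L _ h; simpa using h
    | succ p ih =>
      intro m L hle h
      have h1 := ih m L (by omega) h
      rw [show L - p = (L - (p + 1)) + 1 from by omega] at h1
      have h2 := backRun (m - p * k) 0 (L - (p + 1)) h1
      rwa [show m - (p : ℤ) * k - k = m - ((p + 1 : ℕ) : ℤ) * k from by push_cast; ring] at h2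
  -- the forward map: iterate shifts until a nonzero value appears
  have fwd : ∀ (d : ℕ) (n : ℤ) (L : ℕ), 1 ≤ L → t ≤ L + d → IsRun a 0 n L →
      ∃ j : ℕ, 1 ≤ j ∧ (∀ j' : ℕ, 1 ≤ j' → j' < j → a (n + j' * k) = 0) ∧
        a (n + j * k) ≠ 0 ∧ IsRun a (a (n + j * k)) (n + j * k) (L + j) := by
    intro d
    induction d with
    | zero => intro n L hL ht' h; exact absurd (runBound n L h) (by omega)
    | succ p ih =>
      intro n L hL ht' h
      have h1 := shiftRun n L h
      by_cases hz : a (n + k) = 0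
      · rw [hz] at h1
        obtain ⟨j₀, hj₀1, hj₀int, hj₀ne, hj₀run⟩ := ih (n + k) (L + 1) (by omega) (by omega) h1
        have e : ∀ j' : ℕ, 1 ≤ j' → n + (j' : ℤ) * k = (n + k) + ((j' - 1 : ℕ) : ℤ) * k := by
          intro j' h1'
          have : ((j' - 1 : ℕ) : ℤ) = (j' : ℤ) - 1 := by omega
          rw [this]; ring
        refine ⟨j₀ + 1, by omega, ?_, ?_, ?_⟩
        · intro j' h1' h2'
          rcases Nat.eq_or_lt_of_le h1' with heq | hlt
          · rw [← heq]
            rwa [show n + ((1 : ℕ) : ℤ) * k = n + k from by push_cast; ring]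
          · rw [e j' h1']
            exact hj₀int (j' - 1) (by omega) (by omega)
        · rw [e (j₀ + 1) (by omega), show (j₀ + 1 - 1 : ℕ) = j₀ from by omega]
          exact hj₀ne
        · rw [e (j₀ + 1) (by omega), show (j₀ + 1 - 1 : ℕ) = j₀ from by omega,
            show L + (j₀ + 1) = (L + 1) + j₀ from by omega]
          exact hj₀run
      · refine ⟨1, le_rfl, fun j' h1' h2' => by omega, ?_, ?_⟩
        · rwa [show n + ((1 : ℕ) : ℤ) * k = n + k from by push_cast; ring]
        · rw [show n + ((1 : ℕ) : ℤ) * k = n + k from by push_cast; ring]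
          exact h1
  -- uniqueness of the minimal j
  have jUnique : ∀ (n : ℤ) (j₁ j₂ : ℕ),
      (1 ≤ j₁ ∧ (∀ j' : ℕ, 1 ≤ j' → j' < j₁ → a (n + j' * k) = 0) ∧ a (n + j₁ * k) ≠ 0) →
      (1 ≤ j₂ ∧ (∀ j' : ℕ, 1 ≤ j' → j' < j₂ → a (n + j' * k) = 0) ∧ a (n + j₂ * k) ≠ 0) →
      j₁ = j₂ := by
    rintro n j₁ j₂ ⟨h11, h12, h13⟩ ⟨h21, h22, h23⟩
    rcases lt_trichotomy j₁ j₂ with hlt | heq | hgt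
    · exact absurd (h22 j₁ h11 hlt) h13
    · exact heq
    · exact absurd (h12 j₂ h21 hgt) h23
  -- runs only depend on the residue mod N
  have hperRun : ∀ (n n' : ℤ) (δ : F) (L : ℕ), ((n : ZMod N) = (n' : ZMod N)) →
      IsRun a δ n' L → IsRun a δ n L := by
    intro n n' δ L hc h
    have hsh : ∀ x : ℤ, a (n + x) = a (n' + x) := fun x =>
      hper _ _ (by push_cast [hc]; ring)
    refine ⟨fun j hj => (hsh j).trans (h.1 j hj), ?_, ?_⟩
    · have := hsh (-1)
      rw [show n + (-1 : ℤ) = n - 1 from by ring, show n' + (-1 : ℤ) = n' - 1 from by ring] at this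
      rw [this]; exact h.2.1
    · rw [hsh L]; exact h.2.2
  -- extract the j-function
  have hfwd : ∀ n : ℤ, IsRun a 0 n l →
      ∃ j : ℕ, 1 ≤ j ∧ (∀ j' : ℕ, 1 ≤ j' → j' < j → a (n + j' * k) = 0) ∧
        a (n + j * k) ≠ 0 ∧ IsRun a (a (n + j * k)) (n + j * k) (l + j) :=
    fun n h => fwd t n l hl1 (by omega) h
  choose jf hj1 hjint hjne hjrun using hfwd
  -- the function g
  let g0 : ZMod N → ZMod N := fun x =>
    if h : ∃ n : ℤ, ((n : ZMod N) = x ∧ IsRun a 0 n l) then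
      ((h.choose + (jf h.choose h.choose_spec.2 : ℤ) * k : ℤ) : ZMod N)
    else x
  have gspec : ∀ (n : ℤ) (hn : IsRun a 0 n l),
      g0 (n : ZMod N) = ((n + (jf n hn : ℤ) * k : ℤ) : ZMod N) := by
    intro n hn
    have hex : ∃ n' : ℤ, ((n' : ZMod N) = (n : ZMod N) ∧ IsRun a 0 n' l) := ⟨n, rfl, hn⟩
    show dite _ _ _ = _
    rw [dif_pos hex]
    obtain ⟨hc0, hr0⟩ := hex.choose_spec
    have hjeq : jf hex.choose hr0 = jf n hn := by
      apply jUnique n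
      · refine ⟨hj1 _ hr0, ?_, ?_⟩
        · intro j' h1 h2
          rw [hper (n + (j' : ℤ) * k) (hex.choose + (j' : ℤ) * k) (by push_cast [hc0]; ring)]
          exact hjint _ hr0 j' h1 h2
        · rw [hper (n + (jf hex.choose hr0 : ℤ) * k) (hex.choose + (jf hex.choose hr0 : ℤ) * k)
            (by push_cast [hc0]; ring)]
          exact hjne _ hr0
      · exact ⟨hj1 n hn, hjint n hn, hjne n hn⟩
    rw [show jf hex.choose hex.choose_spec.2 = jf hex.choose hr0 from rfl, hjeq]
    push_cast [hc0]
    ring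
  refine ⟨g0, ⟨?_, ?_, ?_⟩, ?_⟩
  -- MapsTo
  · rintro x ⟨n, hnx, hn⟩
    rw [← hnx, gspec n hn]
    exact ⟨n + (jf n hn : ℤ) * k, rfl, a (n + (jf n hn : ℤ) * k), hjne n hn,
      l + jf n hn, by have := hj1 n hn; omega, hjrun n hn⟩
  -- InjOn
  · rintro x₁ ⟨n₁, h1x, h1⟩ x₂ ⟨n₂, h2x, h2⟩ hgx
    rw [← h1x, ← h2x, gspec n₁ h1, gspec n₂ h2] at hgx
    have hrun2 : IsRun a (a (n₂ + (jf n₂ h2 : ℤ) * k)) (n₁ + (jf n₁ h1 : ℤ) * k)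
        (l + jf n₂ h2) := hperRun _ _ _ _ hgx (hjrun n₂ h2)
    have hlen : l + jf n₁ h1 = l + jf n₂ h2 :=
      runLenUnique _ _ _ _ _ (by omega) (by omega) (hjrun n₁ h1) hrun2
    have hjj : jf n₁ h1 = jf n₂ h2 := by omega
    rw [← h1x, ← h2x]
    rw [hjj] at hgx
    push_cast at hgx
    exact add_right_cancel hgx
  -- SurjOn
  · rintro y ⟨m, hmy, δ, hδ0, l', hll', hrun⟩
    have hrun' : IsRun a δ m ((l' - 1) + 1) := by
      rwa [show (l' - 1) + 1 = l' from by omega]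
    have h0 := backRun m δ (l' - 1) hrun'
    have hback : ∀ i : ℕ, i ≤ l' - 1 - l → IsRun a 0 (m - k - (i : ℤ) * k) (l' - 1 - i) :=
      fun i hi => bwdZero i (m - k) (l' - 1) (by omega) h0
    have hnrun : IsRun a 0 (m - k - ((l' - 1 - l : ℕ) : ℤ) * k) l := by
      have := hback (l' - 1 - l) le_rfl
      rwa [show l' - 1 - (l' - 1 - l) = l from by omega] at this
    set n : ℤ := m - k - ((l' - 1 - l : ℕ) : ℤ) * k with hndef2
    have hc1 : ((l' - 1 - l : ℕ) : ℤ) = (l' : ℤ) - 1 - l := by omega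
    refine ⟨(n : ZMod N), ⟨n, rfl, hnrun⟩, ?_⟩
    rw [gspec n hnrun]
    have hjval : jf n hnrun = l' - l := by
      apply jUnique n _ _ ⟨hj1 n hnrun, hjint n hnrun, hjne n hnrun⟩
      refine ⟨by omega, ?_, ?_⟩
      · intro j' h1j h2j
        have hb := hback (l' - 1 - l - j') (by omega)
        rw [show l' - 1 - (l' - 1 - l - j') = l + j' from by omega] at hb
        have hv := runValue 0 _ _ hb (by omega)
        rwa [show n + (j' : ℤ) * k = m - k - ((l' - 1 - l - j' : ℕ) : ℤ) * k from by
          rw [hndef2, hc1, show ((l' - 1 - l - j' : ℕ) : ℤ) = (l' : ℤ) - 1 - l - j' from by omega]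
          ring]
      · rw [show n + ((l' - l : ℕ) : ℤ) * k = m from by
          rw [hndef2, hc1, show ((l' - l : ℕ) : ℤ) = (l' : ℤ) - l from by omega]; ring]
        rw [runValue δ m l' hrun (by omega)]
        exact hδ0
    rw [hjval, ← hmy]
    congr 1
    rw [hndef2, hc1, show ((l' - l : ℕ) : ℤ) = (l' : ℤ) - l from by omega]
    ring
  -- the explicit description of g
  · intro n hn
    exact ⟨jf n hn, hj1 n hn, hjint n hn, hjne n hn, gspec n hn⟩
end

section
/- Enumerate the nonzero elements of F_q as β_1, …, β_{q−1}, and for each β_i let k_{β_i} ∈ ℤ satisfy α^{k_{β_i}}(α − β_i) = 1. Define the column map φ on {1,…,q+1} × {1,…,t} by φ(1,j) = t−j, φ(2,j) = t+j−1, and φ(i+2, j) = t + j·k_{β_i} for 1 ≤ i ≤ q−1 and 1 ≤ j ≤ t. Then for every left-justified subset L of {1,…,q+1} × {1,…,t} of size t and every function v : L → F_q, there is exactly one element γ ∈ F_{q^t} such that Tr(γ α^{φ(c)}) = v(c) for all c ∈ L. (Hence the q^t × (q+1)t array whose rows are indexed by γ ∈ F_{q^t} and whose entry in row γ and column c is Tr(γ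 α^{φ(c)}) is an ordered orthogonal array OOA(t, q+1, t, q).) -/
open Polynomial Finset

/-- A downward-closed subset of `Icc 1 t` equals `Icc 1 card`. -/
lemma lowerSet_eq_Icc {S : Finset ℕ} {t : ℕ} (hsub : S ⊆ Finset.Icc 1 t)
    (hdc : ∀ j ∈ S, 2 ≤ j → j - 1 ∈ S) : S = Finset.Icc 1 S.card := by
  have hclose : ∀ d j, j ∈ S → 1 ≤ j - d → j - d ∈ S := by
    intro d
    induction d with
    | zero => intro j hj _; simpa using hj
    | succ n ih =>
      intro j hj h1
      have h2 : 2 ≤ j - n := by omega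
      have := hdc _ (ih j hj (by omega)) h2
      simpa [show j - n - 1 = j - (n+1) by omega] using this
  have hfwd : ∀ j ∈ S, j ≤ S.card := by
    intro j hj
    have h1 : Finset.Icc 1 j ⊆ S := by
      intro j' hj'
      simp only [Finset.mem_Icc] at hj'
      have := hclose (j - j') j hj (by omega)
      simpa [show j - (j - j') = j' by omega] using this
    calc j = (Finset.Icc 1 j).card := by simp
    _ ≤ S.card := Finset.card_le_card h1
  ext j
  simp only [Finset.mem_Icc]
  constructor
  · intro hj
    exact ⟨(Finset.mem_Icc.mp (hsub hj)).1, hfwd j hj⟩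
  · rintro ⟨h1, h2⟩
    by_contra hjS
    have hS : S ⊆ Finset.Icc 1 (j - 1) := by
      intro m hm
      have hm1 := (Finset.mem_Icc.mp (hsub hm)).1
      simp only [Finset.mem_Icc]
      refine ⟨hm1, ?_⟩
      by_contra hmu
      have := hclose (m - j) m hm (by omega)
      rw [show m - (m - j) = j by omega] at this
      exact hjS this
    have := Finset.card_le_card hS
    simp only [Nat.card_Icc] at this
    omega

lemma coeff_sum_single {F : Type*} [Field F] {ι : Type*} (s : Finset ι) (c : ι → F) (d : ι → ℕ)
    (j₀ : ι) (h₀ : j₀ ∈ s) (hinj : ∀ j ∈ s, d j = d j₀ → j = j₀) :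
    (∑ j ∈ s, Polynomial.C (c j) * Polynomial.X ^ (d j)).coeff (d j₀) = c j₀ := by
  rw [Polynomial.finset_sum_coeff]
  rw [Finset.sum_eq_single j₀]
  · simp [Polynomial.coeff_C_mul, Polynomial.coeff_X_pow]
  · intro j hj hne
    simp only [Polynomial.coeff_C_mul, Polynomial.coeff_X_pow]
    rw [if_neg (fun h => hne (hinj j hj h.symm)), mul_zero]
  · intro h; exact absurd h₀ h

lemma coeff_sum_zero {F : Type*} [Field F] {ι : Type*} (s : Finset ι) (c : ι → F) (d : ι → ℕ)
    (n : ℕ) (h : ∀ j ∈ s, d j ≠ n) :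
    (∑ j ∈ s, Polynomial.C (c j) * Polynomial.X ^ (d j)).coeff n = 0 := by
  rw [Polynomial.finset_sum_coeff]
  refine Finset.sum_eq_zero fun j hj => ?_
  simp only [Polynomial.coeff_C_mul, Polynomial.coeff_X_pow]
  rw [if_neg (fun hh => h j hj hh.symm), mul_zero]

lemma sum_rows_split {M : Type*} [AddCommMonoid M] {q r : ℕ} (hq : 2 ≤ q) (hr : r = q - 1)
    (f : ℕ → M) :
    ∑ m ∈ Finset.Icc 1 (q+1), f m = f 1 + f 2 + ∑ i ∈ Finset.Icc 1 r, f (i+2) := by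
  have hset : Finset.Icc 1 (q+1)
      = insert 1 (insert 2 ((Finset.Icc 1 r).image (fun i => i + 2))) := by
    ext m
    simp only [Finset.mem_Icc, Finset.mem_insert, Finset.mem_image]
    constructor
    · rintro ⟨h1, h2⟩
      rcases Nat.lt_or_ge m 3 with h | h
      · omega
      · exact Or.inr (Or.inr ⟨m - 2, by omega, by omega⟩)
    · rintro (rfl | rfl | ⟨i, ⟨hi1, hi2⟩, rfl⟩) <;> omega
  rw [hset, Finset.sum_insert, Finset.sum_insert, Finset.sum_image, add_assoc]
  · intro a _ b _ h; simp only at h; omega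
  · simp only [Finset.mem_image, Finset.mem_Icc]
    rintro ⟨i, _, h⟩; omega
  · simp only [Finset.mem_insert, Finset.mem_image, Finset.mem_Icc]
    rintro (h | ⟨i, hi, h⟩) <;> omega
/-- A subset `L` of `{1,…,m} × {1,…,s}` is left-justified if `(i,j) ∈ L` with
`j > 1` implies `(i, j-1) ∈ L`. -/
def LeftJustified (L : Finset (ℕ × ℕ)) : Prop :=
  ∀ p ∈ L, 2 ≤ p.2 → (p.1, p.2 - 1) ∈ L

/-- with the column map `φ(1,j) = t-j`, `φ(2,j) = t+j-1`, and
`φ(i+2,j) = t + j·k_{βᵢ}` (where `α^{k_{βᵢ}}(α - βᵢ) = 1` and `β₁,…,β_{q-1}`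
enumerate the nonzero elements of `F_q`), for every left-justified subset `L`
of `{1,…,q+1} × {1,…,t}` of size `t` and every assignment `v : L → F_q`, there
is exactly one `γ ∈ F_{q^t}` with `Tr(γ α^{φ(c)}) = v c` for all `c ∈ L`;
hence the array with rows `(Tr(γ α^{φ(c)}))_c`, `γ ∈ F_{q^t}`, is an
`OOA(t, q+1, t, q)`. -/
theorem runs_construction_is_OOA
    (F E : Type*) [Field F] [Fintype F] [Field E] [Fintype E] [Algebra F E]
    (t : ℕ) (ht : 3 ≤ t) (hrank : Module.finrank F E = t)
    (α : E) (hprim : ∀ x : E, x ≠ 0 → ∃ m : ℕ, α ^ m = x)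
    (hdeg : (minpoly F α).natDegree = t)
    (β : ℕ → F)
    (hβne : ∀ i : ℕ, 1 ≤ i → i ≤ Fintype.card F - 1 → β i ≠ 0)
    (hβinj : ∀ i i' : ℕ, 1 ≤ i → i ≤ Fintype.card F - 1 → 1 ≤ i' →
        i' ≤ Fintype.card F - 1 → β i = β i' → i = i')
    (hβsurj : ∀ x : F, x ≠ 0 → ∃ i : ℕ, 1 ≤ i ∧ i ≤ Fintype.card F - 1 ∧ β i = x)
    (k : ℕ → ℤ)
    (hk : ∀ i : ℕ, 1 ≤ i → i ≤ Fintype.card F - 1 →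
        α ^ k i * (α - algebraMap F E (β i)) = 1)
    (φ : ℕ × ℕ → ℤ)
    (hφ1 : ∀ j : ℕ, 1 ≤ j → j ≤ t → φ (1, j) = (t : ℤ) - j)
    (hφ2 : ∀ j : ℕ, 1 ≤ j → j ≤ t → φ (2, j) = (t : ℤ) + j - 1)
    (hφ3 : ∀ i j : ℕ, 1 ≤ i → i ≤ Fintype.card F - 1 → 1 ≤ j → j ≤ t →
        φ (i + 2, j) = (t : ℤ) + (j : ℤ) * k i) :
    ∀ (L : Finset (ℕ × ℕ)),
      L ⊆ Finset.Icc 1 (Fintype.card F + 1) ×ˢ Finset.Icc 1 t →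
      LeftJustified L → L.card = t →
      ∀ v : ℕ × ℕ → F, ∃! γ : E, ∀ c ∈ L,
        Algebra.trace F E (γ * α ^ φ c) = v c := by
  intro L hLsub hLJ hLcard v
  classical
  set q := Fintype.card F with hqdef
  have hq2 : 2 ≤ q := Fintype.one_lt_card
  set r := q - 1 with hrdef
  haveI hfd : FiniteDimensional F E := Module.Finite.of_finite
  -- basic facts about α
  have hα0 : α ≠ 0 := by
    intro h
    rw [h, minpoly.zero, Polynomial.natDegree_X] at hdeg
    omega
  have hαβ : ∀ i, 1 ≤ i → i ≤ r → α - algebraMap F E (β i) ≠ 0 := by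
    intro i h1 h2 h
    have := hk i h1 h2
    rw [h, mul_zero] at this
    exact zero_ne_one this
  -- row lengths
  set s : ℕ → ℕ := fun m => ((Finset.Icc 1 t).filter (fun j => (m, j) ∈ L)).card with hsdef
  have hSm : ∀ m, (Finset.Icc 1 t).filter (fun j => (m, j) ∈ L) = Finset.Icc 1 (s m) := by
    intro m
    apply lowerSet_eq_Icc (Finset.filter_subset _ _)
    intro j hj h2
    simp only [Finset.mem_filter, Finset.mem_Icc] at hj ⊢
    exact ⟨⟨by omega, by omega⟩, hLJ _ hj.2 h2⟩
  have hmemL : ∀ m j, (m, j) ∈ L ↔ (1 ≤ j ∧ j ≤ s m) := by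
    intro m j
    constructor
    · intro h
      have hmem := hLsub h
      simp only [Finset.mem_product, Finset.mem_Icc] at hmem
      have hj : j ∈ (Finset.Icc 1 t).filter (fun j => (m, j) ∈ L) :=
        Finset.mem_filter.mpr ⟨Finset.mem_Icc.mpr hmem.2, h⟩
      rw [hSm] at hj
      simpa using hj
    · intro h
      have hj : j ∈ Finset.Icc 1 (s m) := Finset.mem_Icc.mpr h
      rw [← hSm] at hj
      exact (Finset.mem_filter.mp hj).2
  have hsle : ∀ m, s m ≤ t := by
    intro m
    calc s m ≤ (Finset.Icc 1 t).card := Finset.card_filter_le _ _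
    _ = t := by simp
  have hrowrange : ∀ m j, (m, j) ∈ L → 1 ≤ m ∧ m ≤ q + 1 := by
    intro m j h
    have hmem := hLsub h
    simp only [Finset.mem_product, Finset.mem_Icc] at hmem
    exact hmem.1
  -- fibers
  have hfiber : ∀ m, L.filter (fun c => c.1 = m)
      = (Finset.Icc 1 (s m)).image (fun j => (m, j)) := by
    intro m
    ext c
    obtain ⟨a, b⟩ := c
    simp only [Finset.mem_filter, Finset.mem_image, Finset.mem_Icc]
    constructor
    · rintro ⟨hab, rfl⟩
      exact ⟨b, (hmemL a b).mp hab, rfl⟩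
    · rintro ⟨j, hj, hj2⟩
      simp only [Prod.mk.injEq] at hj2
      obtain ⟨rfl, rfl⟩ := hj2
      exact ⟨(hmemL m j).mpr hj, rfl⟩
  have hsplitL : ∀ (f : ℕ × ℕ → E), ∑ c ∈ L, f c
      = ∑ m ∈ Finset.Icc 1 (q+1), ∑ j ∈ Finset.Icc 1 (s m), f (m, j) := by
    intro f
    rw [← Finset.sum_fiberwise_of_maps_to (g := Prod.fst) (t := Finset.Icc 1 (q+1))
        (fun c hc => Finset.mem_Icc.mpr (hrowrange c.1 c.2 hc))]
    refine Finset.sum_congr rfl fun m _ => ?_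
    rw [hfiber m, Finset.sum_image (fun a _ b _ h => by simpa using h)]
  have hcardsum : s 1 + s 2 + ∑ i ∈ Finset.Icc 1 r, s (i+2) = t := by
    have h1 : ∑ m ∈ Finset.Icc 1 (q+1), s m = t := by
      rw [← hLcard, Finset.card_eq_sum_card_fiberwise
        (fun c hc => Finset.mem_Icc.mpr (hrowrange c.1 c.2 hc))]
      refine Finset.sum_congr rfl fun m _ => ?_
      rw [hfiber m, Finset.card_image_of_injective _ (fun a b h => by simpa using h)]
      simp
    rw [← h1, sum_rows_split hq2 hrdef]
  -- the key linear-independence computation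
  have key : ∀ w : ℕ × ℕ → F, (∑ c ∈ L, w c • (α ^ φ c : E)) = 0 → ∀ c ∈ L, w c = 0 := by
    intro w hw
    set βE : ℕ → E := fun i => algebraMap F E (β i) with hβE
    set P1 : Polynomial F := ∑ j ∈ Finset.Icc 1 (s 1),
      Polynomial.C (w (1,j)) * Polynomial.X ^ (s 1 - j) with hP1
    set P2 : Polynomial F := ∑ j ∈ Finset.Icc 1 (s 2),
      Polynomial.C (w (2,j)) * Polynomial.X ^ (s 1 + j - 1) with hP2
    set D : ℕ → Polynomial F := fun i => ∑ j ∈ Finset.Icc 1 (s (i+2)),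
      Polynomial.C (w (i+2,j)) * (Polynomial.X - Polynomial.C (β i)) ^ (s (i+2) - j) with hD
    set PP : Polynomial F := ∏ i ∈ Finset.Icc 1 r,
      (Polynomial.X - Polynomial.C (β i)) ^ (s (i+2)) with hPP
    set Px : ℕ → Polynomial F := fun i => ∏ n ∈ (Finset.Icc 1 r).erase i,
      (Polynomial.X - Polynomial.C (β n)) ^ (s (n+2)) with hPx
    set g : Polynomial F := (P1 + P2) * PP
      + ∑ i ∈ Finset.Icc 1 r, Polynomial.X ^ (s 1) * (D i * Px i) with hg
    -- evaluations
    have hPPE : Polynomial.aeval α PP = ∏ i ∈ Finset.Icc 1 r, (α - βE i) ^ (s (i+2)) := by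
      rw [hPP, map_prod]
      refine Finset.prod_congr rfl fun i _ => ?_
      simp [hβE]
    have hPxE : ∀ i, Polynomial.aeval α (Px i)
        = ∏ n ∈ (Finset.Icc 1 r).erase i, (α - βE n) ^ (s (n+2)) := by
      intro i
      simp only [hPx, map_prod]
      refine Finset.prod_congr rfl fun n _ => ?_
      simp [hβE]
    have hPPsplit : ∀ i ∈ Finset.Icc 1 r, Polynomial.aeval α PP
        = (α - βE i) ^ (s (i+2)) * Polynomial.aeval α (Px i) := by
      intro i hi
      rw [hPPE, hPxE, ← Finset.mul_prod_erase _ _ hi]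
    have hP1E : Polynomial.aeval α P1
        = ∑ j ∈ Finset.Icc 1 (s 1), algebraMap F E (w (1,j)) * α ^ (s 1 - j) := by
      simp only [hP1, map_sum, map_mul, map_pow, Polynomial.aeval_X, Polynomial.aeval_C]
    have hP2E : Polynomial.aeval α P2
        = ∑ j ∈ Finset.Icc 1 (s 2), algebraMap F E (w (2,j)) * α ^ (s 1 + j - 1) := by
      simp only [hP2, map_sum, map_mul, map_pow, Polynomial.aeval_X, Polynomial.aeval_C]
    have hDE : ∀ i, Polynomial.aeval α (D i)
        = ∑ j ∈ Finset.Icc 1 (s (i+2)), algebraMap F E (w (i+2,j)) * (α - βE i) ^ (s (i+2) - j) := by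
      intro i
      simp only [hD, map_sum, map_mul, map_pow, map_sub, Polynomial.aeval_X,
        Polynomial.aeval_C, hβE]
    -- row computations
    have hrow1 : ∀ j ∈ Finset.Icc 1 (s 1),
        (w (1,j) • (α ^ φ (1, j) : E)) * (α ^ (s 1) * Polynomial.aeval α PP)
        = α ^ t * (algebraMap F E (w (1,j)) * α ^ (s 1 - j) * Polynomial.aeval α PP) := by
      intro j hj
      simp only [Finset.mem_Icc] at hj
      rw [Algebra.smul_def, hφ1 j hj.1 (le_trans hj.2 (hsle 1))]
      rw [show (t : ℤ) - (j : ℤ) = ((t - j : ℕ) : ℤ) by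
        have := hsle 1; omega, zpow_natCast]
      have hpow : α ^ (t - j) * α ^ (s 1) = α ^ t * α ^ (s 1 - j) := by
        rw [← pow_add, ← pow_add]
        congr 1
        have := hsle 1; omega
      linear_combination (algebraMap F E (w (1,j)) * Polynomial.aeval α PP) * hpow
    have hrow2 : ∀ j ∈ Finset.Icc 1 (s 2),
        (w (2,j) • (α ^ φ (2, j) : E)) * (α ^ (s 1) * Polynomial.aeval α PP)
        = α ^ t * (algebraMap F E (w (2,j)) * α ^ (s 1 + j - 1) * Polynomial.aeval α PP) := by
      intro j hj
      simp only [Finset.mem_Icc] at hj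
      rw [Algebra.smul_def, hφ2 j hj.1 (le_trans hj.2 (hsle 2))]
      rw [show (t : ℤ) + (j : ℤ) - 1 = ((t + j - 1 : ℕ) : ℤ) by omega, zpow_natCast]
      have hpow : α ^ (t + j - 1) * α ^ (s 1) = α ^ t * α ^ (s 1 + j - 1) := by
        rw [← pow_add, ← pow_add]
        congr 1
        omega
      linear_combination (algebraMap F E (w (2,j)) * Polynomial.aeval α PP) * hpow
    have hrow3 : ∀ i ∈ Finset.Icc 1 r, ∀ j ∈ Finset.Icc 1 (s (i+2)),
        (w (i+2,j) • (α ^ φ (i+2, j) : E)) * (α ^ (s 1) * Polynomial.aeval α PP)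
        = α ^ t * (α ^ (s 1) * (algebraMap F E (w (i+2,j)) *
            ((α - βE i) ^ (s (i+2) - j) * Polynomial.aeval α (Px i)))) := by
      intro i hi j hj
      have hiI := Finset.mem_Icc.mp hi
      simp only [Finset.mem_Icc] at hj
      rw [Algebra.smul_def, hφ3 i j hiI.1 hiI.2 hj.1 (le_trans hj.2 (hsle _))]
      have hcancel : (α ^ k i) * (α - βE i) = 1 := hk i hiI.1 hiI.2
      have hzp : (α : E) ^ ((t : ℤ) + (j : ℤ) * k i) = α ^ t * (α ^ k i) ^ j := by
        rw [zpow_add₀ hα0, zpow_natCast]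
        congr 1
        rw [mul_comm (j : ℤ) (k i), zpow_mul, zpow_natCast]
      rw [hzp, hPPsplit i hi]
      have hup0 : ∀ m : ℕ, (α ^ k i) ^ j * (α - βE i) ^ (j + m) = (α - βE i) ^ m := by
        intro m
        rw [pow_add, ← mul_assoc, ← mul_pow, hcancel, one_pow, one_mul]
      have hup : (α ^ k i) ^ j * (α - βE i) ^ (s (i+2)) = (α - βE i) ^ (s (i+2) - j) := by
        have h := hup0 (s (i+2) - j)
        rwa [show j + (s (i+2) - j) = s (i+2) by omega] at h
      linear_combination (algebraMap F E (w (i+2,j)) * α ^ t * α ^ (s 1)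
        * Polynomial.aeval α (Px i)) * hup
    -- the evaluation identity
    have hR : (∑ c ∈ L, w c • (α ^ φ c : E)) * (α ^ (s 1) * Polynomial.aeval α PP)
        = (∑ j ∈ Finset.Icc 1 (s 1),
            α ^ t * (algebraMap F E (w (1,j)) * α ^ (s 1 - j) * Polynomial.aeval α PP))
          + (∑ j ∈ Finset.Icc 1 (s 2),
            α ^ t * (algebraMap F E (w (2,j)) * α ^ (s 1 + j - 1) * Polynomial.aeval α PP))
          + ∑ i ∈ Finset.Icc 1 r, ∑ j ∈ Finset.Icc 1 (s (i+2)),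
            α ^ t * (α ^ (s 1) * (algebraMap F E (w (i+2,j)) *
              ((α - βE i) ^ (s (i+2) - j) * Polynomial.aeval α (Px i)))) := by
      rw [hsplitL (fun c => w c • (α ^ φ c : E)), sum_rows_split hq2 hrdef, add_mul, add_mul,
        Finset.sum_mul, Finset.sum_mul, Finset.sum_mul]
      congr 1
      · congr 1
        · exact Finset.sum_congr rfl hrow1
        · exact Finset.sum_congr rfl hrow2
      · refine Finset.sum_congr rfl fun i hi => ?_
        rw [Finset.sum_mul]
        exact Finset.sum_congr rfl (hrow3 i hi)
    have hLft : Polynomial.aeval α g * α ^ t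
        = (∑ j ∈ Finset.Icc 1 (s 1),
            α ^ t * (algebraMap F E (w (1,j)) * α ^ (s 1 - j) * Polynomial.aeval α PP))
          + (∑ j ∈ Finset.Icc 1 (s 2),
            α ^ t * (algebraMap F E (w (2,j)) * α ^ (s 1 + j - 1) * Polynomial.aeval α PP))
          + ∑ i ∈ Finset.Icc 1 r, ∑ j ∈ Finset.Icc 1 (s (i+2)),
            α ^ t * (α ^ (s 1) * (algebraMap F E (w (i+2,j)) *
              ((α - βE i) ^ (s (i+2) - j) * Polynomial.aeval α (Px i)))) := by
      rw [hg]
      simp only [map_add, map_mul, map_sum, map_pow, Polynomial.aeval_X]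
      rw [hP1E, hP2E, add_mul, add_mul, add_mul]
      congr 1
      · congr 1
        · rw [Finset.sum_mul, Finset.sum_mul]
          exact Finset.sum_congr rfl fun j _ => by ring
        · rw [Finset.sum_mul, Finset.sum_mul]
          exact Finset.sum_congr rfl fun j _ => by ring
      · rw [Finset.sum_mul]
        refine Finset.sum_congr rfl fun i hi => ?_
        rw [hDE i, Finset.sum_mul, Finset.mul_sum, Finset.sum_mul]
        refine Finset.sum_congr rfl fun j hj => by ring
    have hg0 : Polynomial.aeval α g = 0 := by
      have hEval : Polynomial.aeval α g * α ^ t = 0 := by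
        rw [hLft, ← hR, hw, zero_mul]
      rcases mul_eq_zero.mp hEval with h | h
      · exact h
      · exact absurd h (pow_ne_zero t hα0)
    -- degree bound and g = 0
    have hPPdeg : PP.natDegree ≤ ∑ i ∈ Finset.Icc 1 r, s (i+2) := by
      rw [hPP]
      refine le_trans (Polynomial.natDegree_prod_le _ _) ?_
      refine Finset.sum_le_sum fun i _ => ?_
      rw [Polynomial.natDegree_pow, Polynomial.natDegree_X_sub_C, mul_one]
    have hDdeg : ∀ i, (D i).natDegree ≤ s (i+2) - 1 := by
      intro i
      rw [hD]
      refine Polynomial.natDegree_sum_le_of_forall_le _ _ fun j hj => ?_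
      simp only [Finset.mem_Icc] at hj
      refine le_trans (Polynomial.natDegree_C_mul_le _ _) ?_
      rw [Polynomial.natDegree_pow, Polynomial.natDegree_X_sub_C, mul_one]
      omega
    have hgz : g = 0 := by
      have hgdvd : minpoly F α ∣ g := minpoly.dvd F α hg0
      refine Polynomial.eq_zero_of_dvd_of_natDegree_lt hgdvd ?_
      rw [hdeg]
      have h1 : ((P1 + P2) * PP).natDegree ≤ t - 1 := by
        by_cases h0 : s 1 = 0 ∧ s 2 = 0
        · have e1 : P1 = 0 := by rw [hP1, h0.1]; simp
          have e2 : P2 = 0 := by rw [hP2, h0.2]; simp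
          rw [e1, e2]
          simp
        · have hP1d : P1.natDegree ≤ s 1 + s 2 - 1 := by
            rw [hP1]
            refine Polynomial.natDegree_sum_le_of_forall_le _ _ fun j hj => ?_
            simp only [Finset.mem_Icc] at hj
            refine le_trans (Polynomial.natDegree_C_mul_le _ _) ?_
            rw [Polynomial.natDegree_X_pow]
            omega
          have hP2d : P2.natDegree ≤ s 1 + s 2 - 1 := by
            rw [hP2]
            refine Polynomial.natDegree_sum_le_of_forall_le _ _ fun j hj => ?_
            simp only [Finset.mem_Icc] at hj
            refine le_trans (Polynomial.natDegree_C_mul_le _ _) ?_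
            rw [Polynomial.natDegree_X_pow]
            omega
          have h12 : (P1 + P2).natDegree ≤ s 1 + s 2 - 1 :=
            le_trans (Polynomial.natDegree_add_le _ _) (max_le hP1d hP2d)
          refine le_trans (Polynomial.natDegree_mul_le) ?_
          omega
      have h2 : (∑ i ∈ Finset.Icc 1 r, Polynomial.X ^ (s 1) * (D i * Px i)).natDegree
          ≤ t - 1 := by
        refine Polynomial.natDegree_sum_le_of_forall_le _ _ fun i hi => ?_
        by_cases hsi : s (i+2) = 0
        · have : D i = 0 := by rw [hD]; simp [hsi]
          rw [this]
          simp
        · have hPxd : (Px i).natDegree ≤ (∑ n ∈ (Finset.Icc 1 r).erase i, s (n+2)) := by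
            rw [hPx]
            refine le_trans (Polynomial.natDegree_prod_le _ _) ?_
            refine Finset.sum_le_sum fun n _ => ?_
            rw [Polynomial.natDegree_pow, Polynomial.natDegree_X_sub_C, mul_one]
          have herase : ∑ n ∈ (Finset.Icc 1 r).erase i, s (n+2) + s (i+2)
              = ∑ n ∈ Finset.Icc 1 r, s (n+2) := Finset.sum_erase_add _ _ hi
          refine le_trans (Polynomial.natDegree_mul_le) ?_
          rw [Polynomial.natDegree_X_pow]
          have hmul : (D i * Px i).natDegree ≤ (D i).natDegree + (Px i).natDegree :=
            Polynomial.natDegree_mul_le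
          have := hDdeg i
          omega
      refine lt_of_le_of_lt (Polynomial.natDegree_add_le _ _) ?_
      rw [max_lt_iff]
      constructor <;> omega
    -- coefficients of rows ≥ 3 vanish
    have hD0 : ∀ i ∈ Finset.Icc 1 r, D i = 0 := by
      intro i hi
      have hiI := Finset.mem_Icc.mp hi
      by_cases hsi : s (i+2) = 0
      · rw [hD]; simp [hsi]
      · have hdvd : (Polynomial.X - Polynomial.C (β i)) ^ (s (i+2))
            ∣ (Polynomial.X ^ (s 1) * Px i) * D i := by
          have hsplit : (Polynomial.X ^ (s 1) * Px i) * D i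
              = g - ((P1 + P2) * PP
                + ∑ n ∈ (Finset.Icc 1 r).erase i, Polynomial.X ^ (s 1) * (D n * Px n)) := by
            rw [hg, ← Finset.sum_erase_add _ _ hi]
            ring
          rw [hsplit, hgz, zero_sub, dvd_neg]
          apply dvd_add
          · exact ((Finset.dvd_prod_of_mem
              (fun n => (Polynomial.X - Polynomial.C (β n)) ^ (s (n+2))) hi).mul_left (P1 + P2))
          · refine Finset.dvd_sum fun n hn => ?_
            have hn' := Finset.mem_erase.mp hn
            have hiER : i ∈ (Finset.Icc 1 r).erase n :=
              Finset.mem_erase.mpr ⟨fun h => hn'.1 h.symm, hi⟩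
            exact (((Finset.dvd_prod_of_mem
              (fun m => (Polynomial.X - Polynomial.C (β m)) ^ (s (m+2))) hiER).mul_left
                (D n)).mul_left (Polynomial.X ^ (s 1)))
        have hβi : β i ≠ 0 := hβne i hiI.1 (by omega)
        have hcop : IsCoprime ((Polynomial.X - Polynomial.C (β i)) ^ (s (i+2)))
            (Polynomial.X ^ (s 1) * Px i) := by
          apply IsCoprime.pow_left
          apply IsCoprime.mul_right
          · have h := Polynomial.isCoprime_X_sub_C_of_isUnit_sub
              (a := β i) (b := 0) (by simpa using isUnit_iff_ne_zero.mpr hβi)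
            rw [Polynomial.C_0, sub_zero] at h
            exact h.pow_right
          · rw [hPx]
            refine IsCoprime.prod_right fun n hn => ?_
            have hn' := Finset.mem_erase.mp hn
            have hnI := Finset.mem_Icc.mp hn'.2
            have hne : β i ≠ β n := fun hbeq =>
              hn'.1 ((hβinj i n hiI.1 (by omega) hnI.1 (by omega) hbeq).symm)
            exact (Polynomial.isCoprime_X_sub_C_of_isUnit_sub
              (isUnit_iff_ne_zero.mpr (sub_ne_zero.mpr hne))).pow_right
        have hdvdD : (Polynomial.X - Polynomial.C (β i)) ^ (s (i+2)) ∣ D i :=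
          hcop.dvd_of_dvd_mul_left hdvd
        refine Polynomial.eq_zero_of_dvd_of_natDegree_lt hdvdD ?_
        rw [Polynomial.natDegree_pow, Polynomial.natDegree_X_sub_C, mul_one]
        have := hDdeg i
        omega
    have hw3 : ∀ i ∈ Finset.Icc 1 r, ∀ j ∈ Finset.Icc 1 (s (i+2)), w (i+2, j) = 0 := by
      intro i hi j hj
      have hcompsum : (∑ j ∈ Finset.Icc 1 (s (i+2)),
          Polynomial.C (w (i+2,j)) * Polynomial.X ^ (s (i+2) - j)) = 0 := by
        have h1 : (D i).comp (Polynomial.X + Polynomial.C (β i)) = 0 := by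
          rw [hD0 i hi, Polynomial.zero_comp]
        have h2 : (D i).comp (Polynomial.X + Polynomial.C (β i))
            = ∑ j ∈ Finset.Icc 1 (s (i+2)),
              Polynomial.C (w (i+2,j)) * Polynomial.X ^ (s (i+2) - j) := by
          rw [hD]
          rw [← Polynomial.coe_compRingHom_apply, map_sum]
          refine Finset.sum_congr rfl fun j _ => ?_
          rw [Polynomial.coe_compRingHom_apply, Polynomial.mul_comp, Polynomial.C_comp,
            Polynomial.pow_comp, Polynomial.sub_comp, Polynomial.X_comp, Polynomial.C_comp]
          simp
        rw [← h2, h1]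
      have hj' := Finset.mem_Icc.mp hj
      have hcoeff := coeff_sum_single (Finset.Icc 1 (s (i+2))) (fun j => w (i+2,j))
        (fun j => s (i+2) - j) j hj (fun j' hj'' heq => by
          simp only [Finset.mem_Icc] at hj''
          have heq2 : s (i+2) - j' = s (i+2) - j := heq
          omega)
      rw [hcompsum, Polynomial.coeff_zero] at hcoeff
      exact hcoeff.symm
    -- rows 1 and 2
    have hPPne : PP ≠ 0 := by
      have : PP.Monic := by
        rw [hPP]
        exact Polynomial.monic_prod_of_monic _ _ fun i _ =>
          (Polynomial.monic_X_sub_C _).pow _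
      exact this.ne_zero
    have hA0 : P1 + P2 = 0 := by
      have hsum0 : ∑ i ∈ Finset.Icc 1 r, Polynomial.X ^ (s 1) * (D i * Px i) = 0 :=
        Finset.sum_eq_zero fun i hi => by rw [hD0 i hi]; ring
      have hmul0 : (P1 + P2) * PP = 0 := by
        have h := hgz
        rw [hg, hsum0, add_zero] at h
        exact h
      rcases mul_eq_zero.mp hmul0 with h | h
      · exact h
      · exact absurd h hPPne
    have hw1 : ∀ j ∈ Finset.Icc 1 (s 1), w (1, j) = 0 := by
      intro j hj
      have hj' := Finset.mem_Icc.mp hj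
      have hc1 := coeff_sum_single (Finset.Icc 1 (s 1)) (fun j => w (1,j))
        (fun j => s 1 - j) j hj (fun j' hj'' heq => by
          simp only [Finset.mem_Icc] at hj''
          have heq2 : s 1 - j' = s 1 - j := heq
          omega)
      have hc2 := coeff_sum_zero (Finset.Icc 1 (s 2)) (fun j => w (2,j))
        (fun j => s 1 + j - 1) (s 1 - j) (fun j' hj'' => by
          simp only [Finset.mem_Icc] at hj''
          intro hx
          have hx2 : s 1 + j' - 1 = s 1 - j := hx
          omega)
      have : (P1 + P2).coeff (s 1 - j) = w (1, j) := by
        rw [Polynomial.coeff_add, hP1, hP2, hc1, hc2, add_zero]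
      rw [hA0, Polynomial.coeff_zero] at this
      exact this.symm
    have hw2 : ∀ j ∈ Finset.Icc 1 (s 2), w (2, j) = 0 := by
      intro j hj
      have hj' := Finset.mem_Icc.mp hj
      have hc1 := coeff_sum_zero (Finset.Icc 1 (s 1)) (fun j => w (1,j))
        (fun j => s 1 - j) (s 1 + j - 1) (fun j' hj'' => by
          simp only [Finset.mem_Icc] at hj''
          intro hx
          have hx2 : s 1 - j' = s 1 + j - 1 := hx
          omega)
      have hc2 := coeff_sum_single (Finset.Icc 1 (s 2)) (fun j => w (2,j))
        (fun j => s 1 + j - 1) j hj (fun j' hj'' heq => by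
          simp only [Finset.mem_Icc] at hj''
          have heq2 : s 1 + j' - 1 = s 1 + j - 1 := heq
          omega)
      have : (P1 + P2).coeff (s 1 + j - 1) = w (2, j) := by
        rw [Polynomial.coeff_add, hP1, hP2, hc1, hc2, zero_add]
      rw [hA0, Polynomial.coeff_zero] at this
      exact this.symm
    -- conclude
    intro c hc
    obtain ⟨m, jj⟩ := c
    have hj := (hmemL m jj).mp hc
    obtain ⟨hm1, hm2⟩ := hrowrange m jj hc
    rcases Nat.lt_or_ge m 3 with h3 | h3
    · interval_cases m
      · exact hw1 jj (Finset.mem_Icc.mpr hj)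
      · exact hw2 jj (Finset.mem_Icc.mpr hj)
    · have h := hw3 (m - 2) (Finset.mem_Icc.mpr ⟨by omega, by omega⟩) jj
        (Finset.mem_Icc.mpr ⟨hj.1, by rw [show m - 2 + 2 = m by omega]; exact hj.2⟩)
      rwa [show m - 2 + 2 = m by omega] at h

  -- linear independence of the columns
  have hLI : LinearIndependent F (fun c : {x // x ∈ L} => (α ^ φ (c : ℕ × ℕ) : E)) := by
    rw [Fintype.linearIndependent_iff]
    intro gg hgg c
    set w : ℕ × ℕ → F := fun c => if h : c ∈ L then gg ⟨c, h⟩ else 0 with hwdef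
    have hsum : ∑ c ∈ L, w c • (α ^ φ c : E) = 0 := by
      rw [← hgg, Finset.univ_eq_attach, ← Finset.sum_attach L (fun c => w c • (α ^ φ c : E))]
      refine Finset.sum_congr rfl fun x _ => ?_
      rw [hwdef]
      simp [x.2]
    have := key w hsum c.1 c.2
    rw [hwdef] at this
    simpa [c.2] using this
  -- assemble the basis and finish with the trace form
  have hne : Nonempty {x // x ∈ L} := by
    have : L.Nonempty := Finset.card_pos.mp (by omega)
    exact this.to_subtype
  have hcard : Fintype.card {x // x ∈ L} = Module.finrank F E := by
    rw [Fintype.card_coe, hLcard, hrank]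
  set b := basisOfLinearIndependentOfCardEqFinrank hLI hcard with hbdef
  have hb : ∀ c : {x // x ∈ L}, b c = α ^ φ (c : ℕ × ℕ) := fun c => by
    rw [hbdef, coe_basisOfLinearIndependentOfCardEqFinrank]
  have hBnd : (Algebra.traceForm F E).Nondegenerate := traceForm_nondegenerate F E
  set d := (Algebra.traceForm F E).dualBasis hBnd b with hddef
  set γ₀ : E := ∑ c : {x // x ∈ L}, v c • d c with hγ₀def
  have hγ₀ : ∀ c ∈ L, Algebra.trace F E (γ₀ * α ^ φ c) = v c := by
    intro c hc
    have h1 : Algebra.trace F E (γ₀ * α ^ φ c)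
        = (Algebra.traceForm F E) γ₀ (b ⟨c, hc⟩) := by
      rw [hb ⟨c, hc⟩, Algebra.traceForm_apply]
    rw [h1, hγ₀def]
    simp only [map_sum, LinearMap.sum_apply, map_smul, LinearMap.smul_apply]
    rw [Finset.sum_congr rfl (fun c' _ => by
      rw [LinearMap.BilinForm.apply_dualBasis_left])]
    simp
  refine ⟨γ₀, hγ₀, ?_⟩
  intro γ' hγ'
  have hδ : ∀ c : {x // x ∈ L},
      (Algebra.traceForm F E) (γ' - γ₀) (b c) = 0 := by
    intro c
    rw [hb c, Algebra.traceForm_apply, sub_mul, map_sub, hγ' c.1 c.2, hγ₀ c.1 c.2, sub_self]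
  have hzero : γ' - γ₀ = 0 := by
    apply hBnd.1
    intro y
    have hmap : (Algebra.traceForm F E) (γ' - γ₀) = 0 := b.ext fun c => by
      rw [hδ c]; rfl
    rw [hmap]
    rfl
  have := sub_eq_zero.mp hzero
  exact this
end

section
/- Let S be a finite set of vectors in F_q^t with |S| = n ≥ t ≥ 1, such that every t-element subset of S is linearly independent over F_q (an (n,t)-set). Then n ≤ q + t − 1. -/
/-- if `S` is an `(n,t)`-set in `F_q^t` (every `t`-element
subset of `S` is linearly independent) with `n = |S| ≥ t ≥ 1`, then
`n ≤ q + t - 1`. -/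
theorem nt_set_bound
    (F : Type*) [Field F] [Fintype F]
    (t : ℕ) (ht : 1 ≤ t)
    (S : Finset (Fin t → F)) (hn : t ≤ S.card)
    (hind : ∀ T : Finset (Fin t → F), T ⊆ S → T.card = t →
        LinearIndependent F (fun v : {x // x ∈ T} => (v : Fin t → F))) :
    S.card ≤ Fintype.card F + t - 1 := by
  classical
  have hq : 2 ≤ Fintype.card F := Fintype.one_lt_card
  -- every subset of `S` of size at most `t` is linearly independent
  have hsub : ∀ T : Finset (Fin t → F), T ⊆ S → T.card ≤ t →
      LinearIndependent F (fun v : ((T : Set (Fin t → F))) => (v : Fin t → F)) := by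
    intro T hTS hTc
    obtain ⟨T', hTT', hT'S, hT'c⟩ := Finset.exists_subsuperset_card_eq hTS hTc hn
    have h := hind T' hT'S hT'c
    exact LinearIndepOn.mono (v := id) (s := (T' : Set (Fin t → F))) h (by exact_mod_cast hTT')
  rcases eq_or_lt_of_le ht with h1 | h2
  · -- t = 1
    subst h1
    have : S.card ≤ Fintype.card (Fin 1 → F) := S.card_le_univ
    simpa using this
  -- main case : t ≥ 2
  obtain ⟨V, hVS, hVcard⟩ : ∃ V ⊆ S, V.card = t - 2 :=
    Finset.exists_subset_card_eq (le_trans (Nat.sub_le _ _) hn)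
  set W : Submodule F (Fin t → F) := Submodule.span F (V : Set (Fin t → F)) with hW
  have hVind : LinearIndependent F (fun v : ((V : Set (Fin t → F))) => (v : Fin t → F)) :=
    hsub V hVS (hVcard ▸ Nat.sub_le _ _)
  have hWrank : Module.finrank F W = t - 2 := by
    rw [hW, finrank_span_finset_eq_card hVind, hVcard]
  have hQrank : Module.finrank F ((Fin t → F) ⧸ W) = 2 := by
    have h := Submodule.finrank_quotient_add_finrank W
    rw [hWrank, Module.finrank_fin_fun] at h
    omega
  set b : Module.Basis (Fin 2) F ((Fin t → F) ⧸ W) := Module.finBasisOfFinrankEq F _ hQrank with hb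
  set p : (Fin t → F) → (Fin 2 →₀ F) := fun w => b.repr (Submodule.Quotient.mk w) with hp
  -- vectors outside V are not in W
  have hmem : ∀ w ∈ S \ V, w ∉ W := by
    intro w hw hmemW
    have hw' := Finset.mem_sdiff.mp hw
    have hins : LinearIndependent F
        (fun v : ((insert w V : Finset (Fin t → F)) : Set (Fin t → F)) => (v : Fin t → F)) := by
      apply hsub _ (Finset.insert_subset hw'.1 hVS)
      rw [Finset.card_insert_of_notMem hw'.2, hVcard]; omega
    rw [Finset.coe_insert] at hins
    have hwnot : w ∉ (V : Set (Fin t → F)) := by exact_mod_cast hw'.2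
    exact ((linearIndepOn_id_insert hwnot).mp hins).2 hmemW
  have hpne : ∀ w ∈ S \ V, p w ≠ 0 := by
    intro w hw h0
    have : Submodule.Quotient.mk w = (0 : (Fin t → F) ⧸ W) := b.repr.map_eq_zero_iff.mp h0
    exact hmem w hw ((Submodule.Quotient.mk_eq_zero W).mp this)
  -- slope map
  set f : (Fin t → F) → Option F :=
    fun w => if p w 1 = 0 then none else some (p w 0 / p w 1) with hf
  have hinj : ∀ w ∈ S \ V, ∀ w' ∈ S \ V, f w = f w' → w = w' := by
    intro w hw w' hw' hfe
    by_contra hne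
    -- get proportionality constant c with p w' = c • p w
    obtain ⟨c, hc0, hcp⟩ : ∃ c : F, c ≠ 0 ∧ p w' = c • p w := by
      by_cases h1 : p w 1 = 0
      · have h1' : p w' 1 = 0 := by
          by_contra h
          rw [hf] at hfe; simp [h1, h] at hfe
        have hw0 : p w 0 ≠ 0 := by
          intro h; apply hpne w hw
          ext i; fin_cases i <;> simpa [h1]
        have hw'0 : p w' 0 ≠ 0 := by
          intro h; apply hpne w' hw'
          ext i; fin_cases i <;> simpa [h1']
        refine ⟨p w' 0 / p w 0, div_ne_zero hw'0 hw0, ?_⟩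
        ext i; fin_cases i
        · simp [div_mul_cancel₀ _ hw0]
        · simp [h1, h1']
      · have h1' : p w' 1 ≠ 0 := by
          intro h
          rw [hf] at hfe; simp [h1, h] at hfe
        have hslope : p w 0 / p w 1 = p w' 0 / p w' 1 := by
          rw [hf] at hfe; simpa [h1, h1'] using hfe
        refine ⟨p w' 1 / p w 1, div_ne_zero h1' h1, ?_⟩
        have key : p w 0 * p w' 1 = p w' 0 * p w 1 := by
          field_simp at hslope; linear_combination hslope
        ext i; fin_cases i
        · show p w' 0 = p w' 1 / p w 1 * p w 0
          field_simp
          linear_combination -key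
        · show p w' 1 = p w' 1 / p w 1 * p w 1
          field_simp
    -- hence mk w' = c • mk w
    have hmk : (Submodule.Quotient.mk w' : (Fin t → F) ⧸ W) = c • Submodule.Quotient.mk w := by
      apply b.repr.injective
      rw [map_smul]; exact hcp
    -- so w' ∈ span of V ∪ {w}
    have hspan : w' ∈ Submodule.span F (insert w (V : Set (Fin t → F))) := by
      have : w' - c • w ∈ W := by
        rw [← Submodule.Quotient.mk_eq_zero]
        simp [Submodule.Quotient.mk_sub, Submodule.Quotient.mk_smul, hmk]
      have hWle : W ≤ Submodule.span F (insert w (V : Set (Fin t → F))) :=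
        Submodule.span_mono (Set.subset_insert _ _)
      have h2 : w' - c • w + c • w ∈ Submodule.span F (insert w (V : Set (Fin t → F))) :=
        Submodule.add_mem _ (hWle this)
          (Submodule.smul_mem _ c (Submodule.subset_span (Set.mem_insert _ _)))
      simpa using h2
    -- but {w'} ∪ {w} ∪ V is an independent subset of S, contradiction
    have hw1 := Finset.mem_sdiff.mp hw
    have hw2 := Finset.mem_sdiff.mp hw'
    have hins : LinearIndependent F
        (fun v : ((insert w' (insert w V) : Finset (Fin t → F)) : Set (Fin t → F)) =>
          (v : Fin t → F)) := by
      apply hsub _ (Finset.insert_subset hw2.1 (Finset.insert_subset hw1.1 hVS))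
      rw [Finset.card_insert_of_notMem (by
        simp only [Finset.mem_insert]
        push_neg
        exact ⟨fun h => hne h.symm, hw2.2⟩), Finset.card_insert_of_notMem hw1.2, hVcard]
      omega
    rw [Finset.coe_insert, Finset.coe_insert] at hins
    have hw'not : w' ∉ insert w (V : Set (Fin t → F)) := by
      simp only [Set.mem_insert_iff]
      push_neg
      exact ⟨fun h => hne h.symm, by exact_mod_cast hw2.2⟩
    exact ((linearIndepOn_id_insert hw'not).mp hins).2 hspan
  -- count
  have hcard : (S \ V).card ≤ Fintype.card (Option F) := by
    have := Finset.card_le_card_of_injOn f (fun x _ => Finset.mem_univ (f x))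
      (fun x hx y hy h => hinj x (Finset.mem_coe.mp hx) y (Finset.mem_coe.mp hy) h)
    simpa using this
  have hsplit : (S \ V).card + V.card = S.card := Finset.card_sdiff_add_card_eq_card hVS
  have hopt : Fintype.card (Option F) = Fintype.card F + 1 := Fintype.card_option
  omega
end
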